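/- arXiv:2306.01946 — 5 statements merged into one kernel-verified Lean document; each statement's English description precedes it below -/
import Mathlib

section
/- Let A ∈ ℝ^{m×d}, b ∈ ℝ^m with A v̂ = b, let x ∈ ℝ^d be random with E(x xᵀ) = I_d and E(x xᵀ‖x‖²) = c I_d, and let v⁺ = v − τ⟨Av − b, Ax⟩x. Then E(‖v⁺ − v̂‖²) ≤ ‖v − v̂‖² − τ(2 − τ c‖A‖²)‖Av − b‖², where ‖A‖ is the operator norm. -/
open MeasureTheory Matrix

/-- The spectral (operator) norm of a matrix, as the norm of the induced linear map
between Euclidean spaces. -/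
noncomputable def matrixOpNorm {m d : ℕ} (A : Matrix (Fin m) (Fin d) ℝ) : ℝ :=
  ‖LinearMap.toContinuousLinearMap (Matrix.toEuclideanLin A)‖

lemma sgdas_dot_inner {n : ℕ} (u t : Fin n → ℝ) :
    u ⬝ᵥ t = inner (𝕜 := ℝ) ((WithLp.equiv 2 (Fin n → ℝ)).symm u)
      ((WithLp.equiv 2 (Fin n → ℝ)).symm t) := by
  simp [dotProduct, PiLp.inner_apply, RCLike.inner_apply, conj_trivial, mul_comm]

lemma sgdas_opnorm_bound {m d : ℕ} (A : Matrix (Fin m) (Fin d) ℝ) (r : Fin m → ℝ) :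
    Matrix.vecMul r A ⬝ᵥ Matrix.vecMul r A ≤ matrixOpNorm A ^ 2 * (r ⬝ᵥ r) := by
  set w := Matrix.vecMul r A with hw
  set T := LinearMap.toContinuousLinearMap (Matrix.toEuclideanLin A) with hT
  set w' : EuclideanSpace ℝ (Fin d) := (WithLp.equiv 2 (Fin d → ℝ)).symm w with hw'
  set r' : EuclideanSpace ℝ (Fin m) := (WithLp.equiv 2 (Fin m → ℝ)).symm r with hr'
  have hTw : T w' = (WithLp.equiv 2 (Fin m → ℝ)).symm (A.mulVec w) := rfl
  have h1 : w ⬝ᵥ w = inner (𝕜 := ℝ) (T w') r' := by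
    rw [hTw, ← sgdas_dot_inner, dotProduct_comm (A.mulVec w) r, Matrix.dotProduct_mulVec, ← hw]
  have h2 : inner (𝕜 := ℝ) (T w') r' ≤ ‖T w'‖ * ‖r'‖ := real_inner_le_norm _ _
  have h3 : ‖T w'‖ ≤ matrixOpNorm A * ‖w'‖ := T.le_opNorm w'
  have hww : w ⬝ᵥ w = ‖w'‖ ^ 2 := by
    rw [sgdas_dot_inner, real_inner_self_eq_norm_sq]
  have hrr : r ⬝ᵥ r = ‖r'‖ ^ 2 := by
    rw [sgdas_dot_inner, real_inner_self_eq_norm_sq]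
  have hM : 0 ≤ matrixOpNorm A := norm_nonneg _
  nlinarith [norm_nonneg w', norm_nonneg r', sq_nonneg (‖w'‖ - matrixOpNorm A * ‖r'‖),
    mul_nonneg (norm_nonneg r') hM]

/-- one step of stochastic gradient descent with adjoint sampling for a
consistent system `A v̂ = b`: with `v⁺ = v − τ⟨Av − b, Ax⟩x` one has
`E(‖v⁺ − v̂‖²) ≤ ‖v − v̂‖² − τ(2 − τ c‖A‖²)‖Av − b‖²`. -/
theorem sgdas_one_step_iterate_decrease
    {d m : ℕ} {Ω : Type*} [MeasurableSpace Ω] (μ : Measure Ω) [IsProbabilityMeasure μ]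
    (x : Ω → Fin d → ℝ) (c τ : ℝ)
    (hint2 : ∀ i j, Integrable (fun ω => x ω i * x ω j) μ)
    (hint4 : ∀ i j, Integrable (fun ω => x ω i * x ω j * (x ω ⬝ᵥ x ω)) μ)
    (hiso : ∀ i j, ∫ ω, x ω i * x ω j ∂μ = if i = j then (1 : ℝ) else 0)
    (h4 : ∀ i j, ∫ ω, x ω i * x ω j * (x ω ⬝ᵥ x ω) ∂μ = if i = j then c else 0)
    (A : Matrix (Fin m) (Fin d) ℝ) (b : Fin m → ℝ) (vhat v : Fin d → ℝ)
    (hcons : A.mulVec vhat = b) :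
    ∫ ω, (v - τ • (((A.mulVec v - b) ⬝ᵥ A.mulVec (x ω)) • x ω) - vhat) ⬝ᵥ
          (v - τ • (((A.mulVec v - b) ⬝ᵥ A.mulVec (x ω)) • x ω) - vhat) ∂μ
      ≤ (v - vhat) ⬝ᵥ (v - vhat)
        - τ * (2 - τ * c * matrixOpNorm A ^ 2) * ((A.mulVec v - b) ⬝ᵥ (A.mulVec v - b)) := by
  set e := v - vhat with he
  set r := A.mulVec v - b with hr
  set w := Matrix.vecMul r A with hw
  have hAe : A.mulVec e = r := by
    rw [he, Matrix.mulVec_sub, hcons, hr]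
  have hpt : ∀ ω, (v - τ • ((r ⬝ᵥ A.mulVec (x ω)) • x ω) - vhat) ⬝ᵥ
      (v - τ • ((r ⬝ᵥ A.mulVec (x ω)) • x ω) - vhat)
      = e ⬝ᵥ e - 2 * τ * (∑ i, ∑ j, (w i * e j) * (x ω i * x ω j))
        + τ ^ 2 * (∑ i, ∑ j, (w i * w j) * (x ω i * x ω j * (x ω ⬝ᵥ x ω))) := by
    intro ω
    have hfx : r ⬝ᵥ A.mulVec (x ω) = w ⬝ᵥ x ω := Matrix.dotProduct_mulVec r A (x ω)
    have hvec : v - τ • ((r ⬝ᵥ A.mulVec (x ω)) • x ω) - vhat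
        = e - (τ * (w ⬝ᵥ x ω)) • x ω := by
      rw [hfx]; funext k
      simp only [Pi.sub_apply, Pi.smul_apply, smul_eq_mul, he]
      ring
    rw [hvec]
    have expand : ∀ (a b0 : Fin d → ℝ) (t : ℝ),
        (a - t • b0) ⬝ᵥ (a - t • b0) = a ⬝ᵥ a - 2 * t * (a ⬝ᵥ b0) + t ^ 2 * (b0 ⬝ᵥ b0) := by
      intro a b0 t
      simp only [sub_dotProduct, dotProduct_sub, smul_dotProduct,
        dotProduct_smul, smul_eq_mul, dotProduct_comm b0 a]
      ring
    rw [expand]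
    have hs1 : (e ⬝ᵥ x ω) * (w ⬝ᵥ x ω) = ∑ i, ∑ j, (w i * e j) * (x ω i * x ω j) := by
      rw [dotProduct, dotProduct, Finset.sum_mul_sum]
      rw [Finset.sum_comm]
      exact Finset.sum_congr rfl fun i _ => Finset.sum_congr rfl fun j _ => by ring
    have hs2a : (w ⬝ᵥ x ω) * (w ⬝ᵥ x ω) = ∑ i, ∑ j, (w i * w j) * (x ω i * x ω j) := by
      rw [dotProduct, Finset.sum_mul_sum]
      exact Finset.sum_congr rfl fun i _ => Finset.sum_congr rfl fun j _ => by ring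
    have hs2 : ((w ⬝ᵥ x ω) * (w ⬝ᵥ x ω)) * (x ω ⬝ᵥ x ω)
        = ∑ i, ∑ j, (w i * w j) * (x ω i * x ω j * (x ω ⬝ᵥ x ω)) := by
      rw [hs2a, Finset.sum_mul]
      refine Finset.sum_congr rfl fun i _ => ?_
      rw [Finset.sum_mul]
      exact Finset.sum_congr rfl fun j _ => by ring
    rw [← hs1, ← hs2]
    ring
  have hint1' : ∀ i j : Fin d, Integrable (fun ω => (w i * e j) * (x ω i * x ω j)) μ :=
    fun i j => (hint2 i j).const_mul _
  have hint2' : ∀ i j : Fin d,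
      Integrable (fun ω => (w i * w j) * (x ω i * x ω j * (x ω ⬝ᵥ x ω))) μ :=
    fun i j => (hint4 i j).const_mul _
  have hG_int : Integrable (fun ω => ∑ i, ∑ j, (w i * e j) * (x ω i * x ω j)) μ :=
    integrable_finset_sum _ fun i _ => integrable_finset_sum _ fun j _ => hint1' i j
  have hH_int : Integrable
      (fun ω => ∑ i, ∑ j, (w i * w j) * (x ω i * x ω j * (x ω ⬝ᵥ x ω))) μ :=
    integrable_finset_sum _ fun i _ => integrable_finset_sum _ fun j _ => hint2' i j
  have hG : ∫ ω, (∑ i, ∑ j, (w i * e j) * (x ω i * x ω j)) ∂μ = w ⬝ᵥ e := by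
    rw [integral_finset_sum _ fun i _ => integrable_finset_sum _ fun j _ => hint1' i j]
    have h1 : ∀ i : Fin d, ∫ ω, (∑ j, (w i * e j) * (x ω i * x ω j)) ∂μ
        = ∑ j, (w i * e j) * (if i = j then (1:ℝ) else 0) := by
      intro i
      rw [integral_finset_sum _ fun j _ => hint1' i j]
      exact Finset.sum_congr rfl fun j _ => by
        rw [integral_const_mul, hiso]
    simp_rw [h1]
    simp [mul_ite, mul_one, mul_zero, Finset.sum_ite_eq, dotProduct]
  have hH : ∫ ω, (∑ i, ∑ j, (w i * w j) * (x ω i * x ω j * (x ω ⬝ᵥ x ω))) ∂μ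
      = c * (w ⬝ᵥ w) := by
    rw [integral_finset_sum _ fun i _ => integrable_finset_sum _ fun j _ => hint2' i j]
    have h1 : ∀ i : Fin d, ∫ ω, (∑ j, (w i * w j) * (x ω i * x ω j * (x ω ⬝ᵥ x ω))) ∂μ
        = ∑ j, (w i * w j) * (if i = j then c else 0) := by
      intro i
      rw [integral_finset_sum _ fun j _ => hint2' i j]
      exact Finset.sum_congr rfl fun j _ => by
        rw [integral_const_mul, h4]
    simp_rw [h1]
    simp [mul_ite, mul_zero, Finset.sum_ite_eq, dotProduct, Finset.mul_sum]
    exact Finset.sum_congr rfl fun i _ => by ring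
  have hInt : ∫ ω, ((v - τ • ((r ⬝ᵥ A.mulVec (x ω)) • x ω) - vhat) ⬝ᵥ
      (v - τ • ((r ⬝ᵥ A.mulVec (x ω)) • x ω) - vhat)) ∂μ
      = e ⬝ᵥ e - 2 * τ * (w ⬝ᵥ e) + τ ^ 2 * (c * (w ⬝ᵥ w)) := by
    simp only [hpt]
    have hI1 : Integrable (fun ω =>
        e ⬝ᵥ e - 2 * τ * (∑ i, ∑ j, (w i * e j) * (x ω i * x ω j))) μ :=
      (integrable_const _).sub (hG_int.const_mul _)
    have hI2 : Integrable (fun ω =>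
        τ ^ 2 * (∑ i, ∑ j, (w i * w j) * (x ω i * x ω j * (x ω ⬝ᵥ x ω)))) μ :=
      hH_int.const_mul _
    rw [integral_add hI1 hI2, integral_sub (integrable_const _) (hG_int.const_mul (2 * τ)),
      integral_const, integral_const_mul, integral_const_mul, hG, hH]
    simp
  rw [hInt]
  have hwe : w ⬝ᵥ e = r ⬝ᵥ r := by
    rw [hw, ← Matrix.dotProduct_mulVec, hAe]
  rw [hwe]
  have key : τ ^ 2 * (c * (w ⬝ᵥ w)) ≤ τ ^ 2 * (c * (matrixOpNorm A ^ 2 * (r ⬝ᵥ r))) := by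
    rcases Nat.eq_zero_or_pos d with hd | hd
    · subst hd
      have hr0 : r = 0 := by
        rw [← hAe]; funext k; simp [Matrix.mulVec, dotProduct]
      simp [hr0, dotProduct]
    · have hc : 0 ≤ c := by
        have hc' := h4 ⟨0, hd⟩ ⟨0, hd⟩
        rw [if_pos rfl] at hc'
        rw [← hc']
        apply integral_nonneg
        intro ω
        have hxx : 0 ≤ x ω ⬝ᵥ x ω :=
          Finset.sum_nonneg fun j _ => mul_self_nonneg _
        exact mul_nonneg (mul_self_nonneg _) hxx
      have hb := sgdas_opnorm_bound A r
      rw [← hw] at hb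
      exact mul_le_mul_of_nonneg_left (mul_le_mul_of_nonneg_left hb hc) (sq_nonneg τ)
  nlinarith [key]
end

section
/- Under the assumptions of the SGDAS one-step lemma with constant stepsize τ, E(‖v⁺ − v̂‖²) = ⟨v − v̂, (I − τ AᵀA(2I − τ c AᵀA))(v − v̂)⟩, and consequently E(‖v⁺ − v̂‖²) ≤ λ‖v − v̂‖² with λ = ρ(I_d − τ AᵀA(2I − τ c AᵀA)), where ρ denotes the spectral radius. -/
open MeasureTheory Matrix

private lemma sgdas_aux_quadform_le {d : ℕ} (B : Matrix (Fin d) (Fin d) ℝ)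
    (hsym : B.IsHermitian) (lam : ℝ)
    (hlam : lam = sSup {r : ℝ | ∃ t : ℝ, |t| = r ∧
        ∃ w : Fin d → ℝ, w ≠ 0 ∧ B.mulVec w = t • w}) (e : Fin d → ℝ) :
    e ⬝ᵥ B.mulVec e ≤ lam * (e ⬝ᵥ e) := by
  set S : Set ℝ := {r : ℝ | ∃ t : ℝ, |t| = r ∧
        ∃ w : Fin d → ℝ, w ≠ 0 ∧ B.mulVec w = t • w} with hS
  have hbdd : BddAbove S := by
    refine ⟨∑ i, ∑ j, |B i j|, ?_⟩
    rintro r ⟨t, rfl, w, hw, hwe⟩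
    obtain ⟨i1, hi1⟩ := Function.ne_iff.mp hw
    obtain ⟨i0, -, hi0⟩ := Finset.exists_max_image Finset.univ (fun j => |w j|)
      ⟨i1, Finset.mem_univ i1⟩
    have hwi0 : 0 < |w i0| :=
      lt_of_lt_of_le (abs_pos.mpr (by simpa using hi1)) (hi0 i1 (Finset.mem_univ i1))
    have hrow : t * w i0 = ∑ j, B i0 j * w j := by
      have := congrFun hwe i0
      simpa [Matrix.mulVec, dotProduct] using this.symm
    have key : |t| * |w i0| ≤ (∑ i, ∑ j, |B i j|) * |w i0| := by
      calc |t| * |w i0| = |t * w i0| := (abs_mul t (w i0)).symm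
        _ = |∑ j, B i0 j * w j| := by rw [hrow]
        _ ≤ ∑ j, |B i0 j * w j| := Finset.abs_sum_le_sum_abs _ _
        _ = ∑ j, |B i0 j| * |w j| := by simp [abs_mul]
        _ ≤ ∑ j, |B i0 j| * |w i0| := Finset.sum_le_sum fun j _ =>
            mul_le_mul_of_nonneg_left (hi0 j (Finset.mem_univ j)) (abs_nonneg _)
        _ = (∑ j, |B i0 j|) * |w i0| := (Finset.sum_mul _ _ _).symm
        _ ≤ (∑ i, ∑ j, |B i j|) * |w i0| :=
            mul_le_mul_of_nonneg_right
              (Finset.single_le_sum (f := fun i => ∑ j, |B i j|)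
                (fun i _ => Finset.sum_nonneg fun j _ => abs_nonneg _) (Finset.mem_univ i0))
              (abs_nonneg _)
    exact le_of_mul_le_mul_right key hwi0
  set bb := hsym.eigenvectorBasis with hbb
  have heig : ∀ i, B.mulVec (bb i) = hsym.eigenvalues i • (bb i) :=
    fun i => hsym.mulVec_eigenvectorBasis i
  have hmem : ∀ i, |hsym.eigenvalues i| ∈ S :=
    fun i => ⟨hsym.eigenvalues i, rfl, bb i, (WithLp.ofLp_eq_zero 2).not.mpr (bb.orthonormal.ne_zero i), heig i⟩
  have hle : ∀ i, hsym.eigenvalues i ≤ lam := fun i =>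
    (le_abs_self _).trans (hlam ▸ le_csSup hbdd (hmem i))
  set toE : (Fin d → ℝ) → EuclideanSpace ℝ (Fin d) := fun y => WithLp.toLp 2 y with htoE
  have hdot : ∀ y z : Fin d → ℝ, y ⬝ᵥ z = inner (𝕜 := ℝ) (toE y) (toE z) := by
    intro y z
    simp [htoE, dotProduct, PiLp.inner_apply, RCLike.inner_apply, mul_comm]
  have hBsym : ∀ i, inner (𝕜 := ℝ) (bb i) (toE (B.mulVec e))
      = hsym.eigenvalues i * inner (𝕜 := ℝ) (bb i) (toE e) := by
    intro i
    have h1 : (bb i : Fin d → ℝ) ⬝ᵥ B.mulVec e = (B.mulVec (bb i)) ⬝ᵥ e := by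
      have hBt : Bᵀ = B := by
        ext i j
        have := congrFun (congrFun hsym.eq i) j
        simpa [Matrix.conjTranspose_apply] using this
      rw [Matrix.dotProduct_mulVec, ← Matrix.mulVec_transpose, hBt]
    have h2 : (B.mulVec (bb i)) ⬝ᵥ e = hsym.eigenvalues i * ((bb i : Fin d → ℝ) ⬝ᵥ e) := by
      rw [heig i, smul_dotProduct]; rfl
    have := h1.trans h2
    rw [hdot, hdot] at this
    exact this
  calc e ⬝ᵥ B.mulVec e = inner (𝕜 := ℝ) (toE e) (toE (B.mulVec e)) := hdot _ _
    _ = ∑ i, inner (𝕜 := ℝ) (toE e) (bb i) * inner (𝕜 := ℝ) (bb i) (toE (B.mulVec e)) :=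
        (bb.sum_inner_mul_inner _ _).symm
    _ = ∑ i, hsym.eigenvalues i * (inner (𝕜 := ℝ) (bb i) (toE e))^2 := by
        refine Finset.sum_congr rfl fun i _ => ?_
        rw [hBsym i, real_inner_comm (toE e) (bb i)]
        ring
    _ ≤ ∑ i, lam * (inner (𝕜 := ℝ) (bb i) (toE e))^2 := Finset.sum_le_sum fun i _ =>
        mul_le_mul_of_nonneg_right (hle i) (sq_nonneg _)
    _ = lam * ∑ i, inner (𝕜 := ℝ) (toE e) (bb i) * inner (𝕜 := ℝ) (bb i) (toE e) := by
        rw [Finset.mul_sum]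
        refine Finset.sum_congr rfl fun i _ => ?_
        rw [real_inner_comm (toE e) (bb i)]
        ring
    _ = lam * inner (𝕜 := ℝ) (toE e) (toE e) := by rw [bb.sum_inner_mul_inner]
    _ = lam * (e ⬝ᵥ e) := by rw [hdot]

/-- one step of SGDAS with constant stepsize `τ` for a consistent system
`A v̂ = b`: `E(‖v⁺ − v̂‖²) = ⟨v − v̂, (I − τ AᵀA(2I − τ c AᵀA))(v − v̂)⟩`, and consequently
`E(‖v⁺ − v̂‖²) ≤ λ ‖v − v̂‖²` with `λ` the spectral radius of the symmetric matrix
`I − τ AᵀA(2I − τ c AᵀA)` (the supremum of the absolute values of its eigenvalues). -/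
theorem sgdas_one_step_contraction_spectral_radius
    {d m : ℕ} {Ω : Type*} [MeasurableSpace Ω] (μ : Measure Ω) [IsProbabilityMeasure μ]
    (x : Ω → Fin d → ℝ) (c τ : ℝ)
    (hint2 : ∀ i j, Integrable (fun ω => x ω i * x ω j) μ)
    (hint4 : ∀ i j, Integrable (fun ω => x ω i * x ω j * (x ω ⬝ᵥ x ω)) μ)
    (hiso : ∀ i j, ∫ ω, x ω i * x ω j ∂μ = if i = j then (1 : ℝ) else 0)
    (h4 : ∀ i j, ∫ ω, x ω i * x ω j * (x ω ⬝ᵥ x ω) ∂μ = if i = j then c else 0)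
    (A : Matrix (Fin m) (Fin d) ℝ) (b : Fin m → ℝ) (vhat v : Fin d → ℝ)
    (hcons : A.mulVec vhat = b)
    (B : Matrix (Fin d) (Fin d) ℝ)
    (hB : B = (1 : Matrix (Fin d) (Fin d) ℝ)
        - τ • ((Aᵀ * A) * ((2 : ℝ) • (1 : Matrix (Fin d) (Fin d) ℝ) - (τ * c) • (Aᵀ * A))))
    (lam : ℝ)
    (hlam : lam = sSup {r : ℝ | ∃ t : ℝ, |t| = r ∧
        ∃ w : Fin d → ℝ, w ≠ 0 ∧ B.mulVec w = t • w}) :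
    (∫ ω, (v - τ • (((A.mulVec v - b) ⬝ᵥ A.mulVec (x ω)) • x ω) - vhat) ⬝ᵥ
          (v - τ • (((A.mulVec v - b) ⬝ᵥ A.mulVec (x ω)) • x ω) - vhat) ∂μ
        = (v - vhat) ⬝ᵥ B.mulVec (v - vhat)) ∧
    (∫ ω, (v - τ • (((A.mulVec v - b) ⬝ᵥ A.mulVec (x ω)) • x ω) - vhat) ⬝ᵥ
          (v - τ • (((A.mulVec v - b) ⬝ᵥ A.mulVec (x ω)) • x ω) - vhat) ∂μ
        ≤ lam * ((v - vhat) ⬝ᵥ (v - vhat))) := by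
  have hsym : B.IsHermitian := by
    have hM : (Aᵀ * A)ᵀ = Aᵀ * A := by rw [Matrix.transpose_mul, Matrix.transpose_transpose]
    rw [Matrix.IsHermitian, Matrix.conjTranspose_eq_transpose_of_trivial, hB]
    simp only [Matrix.transpose_sub, Matrix.transpose_smul, Matrix.transpose_one,
      Matrix.transpose_mul, Matrix.transpose_smul, hM, Matrix.mul_sub, Matrix.mul_smul,
      Matrix.mul_one, Matrix.smul_mul, Matrix.one_mul]
  subst hcons
  set e : Fin d → ℝ := v - vhat with he
  set u : Fin d → ℝ := (Aᵀ * A).mulVec e with hu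
  have hcoef : ∀ ω, (A.mulVec v - A.mulVec vhat) ⬝ᵥ A.mulVec (x ω) = u ⬝ᵥ x ω := by
    intro ω
    rw [← Matrix.mulVec_sub, Matrix.dotProduct_mulVec, ← Matrix.mulVec_transpose,
      Matrix.mulVec_mulVec]
  have hpt : ∀ ω, (v - τ • (((A.mulVec v - A.mulVec vhat) ⬝ᵥ A.mulVec (x ω)) • x ω) - vhat) ⬝ᵥ
          (v - τ • (((A.mulVec v - A.mulVec vhat) ⬝ᵥ A.mulVec (x ω)) • x ω) - vhat)
      = e ⬝ᵥ e - 2*τ * (∑ i, ∑ j, u i * e j * (x ω i * x ω j))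
        + τ^2 * (∑ i, ∑ j, u i * u j * (x ω i * x ω j * (x ω ⬝ᵥ x ω))) := by
    intro ω
    have h1 : v - τ • (((A.mulVec v - A.mulVec vhat) ⬝ᵥ A.mulVec (x ω)) • x ω) - vhat
        = e - (τ * (u ⬝ᵥ x ω)) • x ω := by
      rw [hcoef]; ext i; simp [he, smul_smul]; ring
    rw [h1]
    have hsum1 : (u ⬝ᵥ x ω) * (e ⬝ᵥ x ω) = ∑ i, ∑ j, u i * e j * (x ω i * x ω j) := by
      rw [dotProduct, dotProduct, Finset.sum_mul_sum]
      exact Finset.sum_congr rfl fun i _ => Finset.sum_congr rfl fun j _ => by ring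
    have hsum2 : (u ⬝ᵥ x ω) * (u ⬝ᵥ x ω) * (x ω ⬝ᵥ x ω)
        = ∑ i, ∑ j, u i * u j * (x ω i * x ω j * (x ω ⬝ᵥ x ω)) := by
      calc (u ⬝ᵥ x ω) * (u ⬝ᵥ x ω) * (x ω ⬝ᵥ x ω)
          = (∑ i, u i * x ω i) * (∑ j, u j * x ω j) * (x ω ⬝ᵥ x ω) := rfl
        _ = ∑ i, ∑ j, u i * u j * (x ω i * x ω j * (x ω ⬝ᵥ x ω)) := by
            rw [Finset.sum_mul_sum, Finset.sum_mul]
            refine Finset.sum_congr rfl fun i _ => ?_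
            rw [Finset.sum_mul]
            exact Finset.sum_congr rfl fun j _ => by ring
    simp only [sub_dotProduct, dotProduct_sub, smul_dotProduct,
      dotProduct_smul, smul_eq_mul, ← hsum1, ← hsum2]
    rw [dotProduct_comm (x ω) e]
    ring
  have hI1 : Integrable (fun ω => ∑ i, ∑ j, u i * e j * (x ω i * x ω j)) μ :=
    integrable_finset_sum _ fun i _ => integrable_finset_sum _ fun j _ =>
      (hint2 i j).const_mul _
  have hI2 : Integrable (fun ω => ∑ i, ∑ j, u i * u j * (x ω i * x ω j * (x ω ⬝ᵥ x ω))) μ :=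
    integrable_finset_sum _ fun i _ => integrable_finset_sum _ fun j _ =>
      (hint4 i j).const_mul _
  have heq : ∫ ω, (v - τ • (((A.mulVec v - A.mulVec vhat) ⬝ᵥ A.mulVec (x ω)) • x ω) - vhat) ⬝ᵥ
          (v - τ • (((A.mulVec v - A.mulVec vhat) ⬝ᵥ A.mulVec (x ω)) • x ω) - vhat) ∂μ
        = e ⬝ᵥ B.mulVec e := by
    calc ∫ ω, (v - τ • (((A.mulVec v - A.mulVec vhat) ⬝ᵥ A.mulVec (x ω)) • x ω) - vhat) ⬝ᵥ
            (v - τ • (((A.mulVec v - A.mulVec vhat) ⬝ᵥ A.mulVec (x ω)) • x ω) - vhat) ∂μ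
        = ∫ ω, (e ⬝ᵥ e - 2*τ * (∑ i, ∑ j, u i * e j * (x ω i * x ω j))
          + τ^2 * (∑ i, ∑ j, u i * u j * (x ω i * x ω j * (x ω ⬝ᵥ x ω)))) ∂μ := by
          exact integral_congr_ae (Filter.Eventually.of_forall hpt)
      _ = e ⬝ᵥ e - 2*τ * (∫ ω, ∑ i, ∑ j, u i * e j * (x ω i * x ω j) ∂μ)
          + τ^2 * (∫ ω, ∑ i, ∑ j, u i * u j * (x ω i * x ω j * (x ω ⬝ᵥ x ω)) ∂μ) := by
          have hIa : Integrable (fun ω => e ⬝ᵥ e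
              - 2*τ * (∑ i, ∑ j, u i * e j * (x ω i * x ω j))) μ :=
            (integrable_const _).sub (hI1.const_mul _)
          have hIb : Integrable (fun ω =>
              τ^2 * (∑ i, ∑ j, u i * u j * (x ω i * x ω j * (x ω ⬝ᵥ x ω)))) μ :=
            hI2.const_mul _
          rw [integral_add hIa hIb, integral_sub (integrable_const _) (hI1.const_mul _),
            integral_const, integral_const_mul, integral_const_mul]
          simp
      _ = e ⬝ᵥ e - 2*τ * (u ⬝ᵥ e) + τ^2 * (c * (u ⬝ᵥ u)) := by
          congr 2
          · rw [integral_finset_sum _ fun i _ => integrable_finset_sum _ fun j _ =>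
              (hint2 i j).const_mul _]
            simp_rw [integral_finset_sum _ fun j _ => (hint2 _ j).const_mul _,
              integral_const_mul, hiso]
            simp [dotProduct, mul_ite]
          · rw [integral_finset_sum _ fun i _ => integrable_finset_sum _ fun j _ =>
              (hint4 i j).const_mul _]
            simp_rw [integral_finset_sum _ fun j _ => (hint4 _ j).const_mul _,
              integral_const_mul, h4]
            simp [dotProduct, mul_ite, Finset.mul_sum]
            exact Finset.sum_congr rfl fun i _ => by ring
      _ = e ⬝ᵥ B.mulVec e := by
          rw [hB]
          have hBe : ((1 : Matrix (Fin d) (Fin d) ℝ)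
              - τ • ((Aᵀ * A) * ((2 : ℝ) • (1 : Matrix (Fin d) (Fin d) ℝ)
                - (τ * c) • (Aᵀ * A)))).mulVec e
              = e - (2*τ) • u + (τ*τ*c) • ((Aᵀ * A).mulVec u) := by
            rw [Matrix.sub_mulVec, Matrix.one_mulVec, Matrix.smul_mulVec,
              ← Matrix.mulVec_mulVec, Matrix.sub_mulVec, Matrix.smul_mulVec,
              Matrix.smul_mulVec, Matrix.one_mulVec, ← hu, Matrix.mulVec_sub,
              Matrix.mulVec_smul, Matrix.mulVec_smul]
            module
          rw [hBe]
          have hsymu : e ⬝ᵥ ((Aᵀ * A).mulVec u) = u ⬝ᵥ u := by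
            rw [Matrix.dotProduct_mulVec, ← Matrix.mulVec_transpose, Matrix.transpose_mul,
              Matrix.transpose_transpose, ← hu]
          simp only [dotProduct_add, dotProduct_sub, dotProduct_smul,
            smul_eq_mul, hsymu]
          rw [dotProduct_comm u e]
          ring
  exact ⟨heq, heq ▸ sgdas_aux_quadform_le B hsym lam hlam e⟩
end

section
/- Let A ∈ ℝ^{m×d}, b ∈ ℝ^m (arbitrary, possibly inconsistent), x isotropic with E(xxᵀ)=I_d and E(xxᵀ‖x‖²)=c I_d, and v⁺ = v − τ⟨Av−b, Ax⟩x. Then E(‖Av⁺ − b‖²) ≤ ‖Av − b‖² − τ(2 − τ c‖A‖²)‖Aᵀ(Av − b)‖². -/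
open MeasureTheory Matrix

lemma opnorm_bound {m d : ℕ} (A : Matrix (Fin m) (Fin d) ℝ) (y : Fin d → ℝ) :
    A.mulVec y ⬝ᵥ A.mulVec y ≤ matrixOpNorm A ^ 2 * (y ⬝ᵥ y) := by
  set w : EuclideanSpace ℝ (Fin d) := (WithLp.equiv 2 (Fin d → ℝ)).symm y with hw
  have h1 : ‖(LinearMap.toContinuousLinearMap (Matrix.toEuclideanLin A)) w‖ ≤ matrixOpNorm A * ‖w‖ :=
    (LinearMap.toContinuousLinearMap (Matrix.toEuclideanLin A)).le_opNorm w
  have h2 : (LinearMap.toContinuousLinearMap (Matrix.toEuclideanLin A)) w =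
      (WithLp.equiv 2 (Fin m → ℝ)).symm (A.mulVec y) := by
    simp [Matrix.toEuclideanLin_apply, hw]
  have hnw : ‖w‖ ^ 2 = y ⬝ᵥ y := by
    rw [hw, EuclideanSpace.norm_eq, Real.sq_sqrt (Finset.sum_nonneg fun i _ => sq_nonneg _)]
    simp [dotProduct, sq]
  have hnAw : ‖(WithLp.equiv 2 (Fin m → ℝ)).symm (A.mulVec y)‖ ^ 2 = A.mulVec y ⬝ᵥ A.mulVec y := by
    rw [EuclideanSpace.norm_eq, Real.sq_sqrt (Finset.sum_nonneg fun i _ => sq_nonneg _)]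
    simp [dotProduct, sq]
  calc A.mulVec y ⬝ᵥ A.mulVec y = ‖(WithLp.equiv 2 (Fin m → ℝ)).symm (A.mulVec y)‖ ^ 2 := hnAw.symm
    _ ≤ (matrixOpNorm A * ‖w‖)^2 := by
        rw [← h2]; exact pow_le_pow_left₀ (norm_nonneg _) h1 2
    _ = matrixOpNorm A ^2 * (y ⬝ᵥ y) := by rw [mul_pow, hnw]


/-- one step of SGDAS for an arbitrary (possibly inconsistent) right hand
side `b`: with `v⁺ = v − τ⟨Av − b, Ax⟩x` one has
`E(‖Av⁺ − b‖²) ≤ ‖Av − b‖² − τ(2 − τ c‖A‖²)‖Aᵀ(Av − b)‖²`. -/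
theorem sgdas_one_step_residual_decrease
    {d m : ℕ} {Ω : Type*} [MeasurableSpace Ω] (μ : Measure Ω) [IsProbabilityMeasure μ]
    (x : Ω → Fin d → ℝ) (c τ : ℝ)
    (hint2 : ∀ i j, Integrable (fun ω => x ω i * x ω j) μ)
    (hint4 : ∀ i j, Integrable (fun ω => x ω i * x ω j * (x ω ⬝ᵥ x ω)) μ)
    (hiso : ∀ i j, ∫ ω, x ω i * x ω j ∂μ = if i = j then (1 : ℝ) else 0)
    (h4 : ∀ i j, ∫ ω, x ω i * x ω j * (x ω ⬝ᵥ x ω) ∂μ = if i = j then c else 0)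
    (A : Matrix (Fin m) (Fin d) ℝ) (b : Fin m → ℝ) (v : Fin d → ℝ) :
    ∫ ω, (A.mulVec (v - τ • (((A.mulVec v - b) ⬝ᵥ A.mulVec (x ω)) • x ω)) - b) ⬝ᵥ
          (A.mulVec (v - τ • (((A.mulVec v - b) ⬝ᵥ A.mulVec (x ω)) • x ω)) - b) ∂μ
      ≤ (A.mulVec v - b) ⬝ᵥ (A.mulVec v - b)
        - τ * (2 - τ * c * matrixOpNorm A ^ 2) *
            ((Aᵀ.mulVec (A.mulVec v - b)) ⬝ᵥ (Aᵀ.mulVec (A.mulVec v - b))) := by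
  set r : Fin m → ℝ := A.mulVec v - b with hr
  set g : Fin d → ℝ := Aᵀ.mulVec r with hg
  set s : Ω → ℝ := fun ω => ∑ i, g i * x ω i with hs
  have hts : ∀ ω, r ⬝ᵥ A.mulVec (x ω) = s ω := by
    intro ω
    rw [Matrix.dotProduct_mulVec, ← Matrix.mulVec_transpose]
    rfl
  -- pointwise identity
  have key : ∀ ω, (A.mulVec (v - τ • ((r ⬝ᵥ A.mulVec (x ω)) • x ω)) - b) ⬝ᵥ
      (A.mulVec (v - τ • ((r ⬝ᵥ A.mulVec (x ω)) • x ω)) - b)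
      = r ⬝ᵥ r + ((-2*τ) * (s ω)^2
          + τ^2 * ((s ω)^2 * (A.mulVec (x ω) ⬝ᵥ A.mulVec (x ω)))) := by
    intro ω
    have h1 : A.mulVec (v - τ • ((r ⬝ᵥ A.mulVec (x ω)) • x ω)) - b
        = r - (τ * s ω) • A.mulVec (x ω) := by
      rw [Matrix.mulVec_sub, Matrix.mulVec_smul, Matrix.mulVec_smul, hts ω, smul_smul,
        sub_right_comm, hr]
    rw [h1]
    simp only [sub_dotProduct, dotProduct_sub, smul_dotProduct,
      dotProduct_smul, dotProduct_comm (A.mulVec (x ω)) r, hts ω, smul_eq_mul]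
    ring
  -- second and fourth moment integrals
  have hi2 : Integrable (fun ω => (s ω)^2) μ := by
    have he : (fun ω => (s ω)^2)
        = fun ω => ∑ i, ∑ j, (g i * g j) * (x ω i * x ω j) := by
      funext ω
      rw [hs, sq, Finset.sum_mul_sum]
      exact Finset.sum_congr rfl fun i _ => Finset.sum_congr rfl fun j _ => by ring
    rw [he]
    exact integrable_finset_sum _ fun i _ => integrable_finset_sum _ fun j _ =>
      (hint2 i j).const_mul _
  have hv2 : ∫ ω, (s ω)^2 ∂μ = g ⬝ᵥ g := by
    have he : (fun ω => (s ω)^2)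
        = fun ω => ∑ i, ∑ j, (g i * g j) * (x ω i * x ω j) := by
      funext ω
      rw [hs, sq, Finset.sum_mul_sum]
      exact Finset.sum_congr rfl fun i _ => Finset.sum_congr rfl fun j _ => by ring
    rw [he, integral_finset_sum _ fun i _ => integrable_finset_sum _ fun j _ =>
      (hint2 i j).const_mul _]
    have : ∀ i : Fin d, ∫ ω, ∑ j, (g i * g j) * (x ω i * x ω j) ∂μ
        = ∑ j, (g i * g j) * ∫ ω, x ω i * x ω j ∂μ := by
      intro i
      rw [integral_finset_sum _ fun j _ => (hint2 i j).const_mul _]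
      exact Finset.sum_congr rfl fun j _ => integral_const_mul _ _
    simp only [this, hiso]
    simp [dotProduct, mul_ite, Finset.sum_ite_eq']
  have hi4 : Integrable (fun ω => (s ω)^2 * (x ω ⬝ᵥ x ω)) μ := by
    have he : (fun ω => (s ω)^2 * (x ω ⬝ᵥ x ω))
        = fun ω => ∑ i, ∑ j, (g i * g j) * (x ω i * x ω j * (x ω ⬝ᵥ x ω)) := by
      funext ω
      rw [hs, sq, Finset.sum_mul_sum, Finset.sum_mul]
      exact Finset.sum_congr rfl fun i _ => by
        rw [Finset.sum_mul]
        exact Finset.sum_congr rfl fun j _ => by ring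
    rw [he]
    exact integrable_finset_sum _ fun i _ => integrable_finset_sum _ fun j _ =>
      (hint4 i j).const_mul _
  have hv4 : ∫ ω, (s ω)^2 * (x ω ⬝ᵥ x ω) ∂μ = c * (g ⬝ᵥ g) := by
    have he : (fun ω => (s ω)^2 * (x ω ⬝ᵥ x ω))
        = fun ω => ∑ i, ∑ j, (g i * g j) * (x ω i * x ω j * (x ω ⬝ᵥ x ω)) := by
      funext ω
      rw [hs, sq, Finset.sum_mul_sum, Finset.sum_mul]
      exact Finset.sum_congr rfl fun i _ => by
        rw [Finset.sum_mul]
        exact Finset.sum_congr rfl fun j _ => by ring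
    rw [he, integral_finset_sum _ fun i _ => integrable_finset_sum _ fun j _ =>
      (hint4 i j).const_mul _]
    have : ∀ i : Fin d, ∫ ω, ∑ j, (g i * g j) * (x ω i * x ω j * (x ω ⬝ᵥ x ω)) ∂μ
        = ∑ j, (g i * g j) * ∫ ω, x ω i * x ω j * (x ω ⬝ᵥ x ω) ∂μ := by
      intro i
      rw [integral_finset_sum _ fun j _ => (hint4 i j).const_mul _]
      exact Finset.sum_congr rfl fun j _ => integral_const_mul _ _
    simp only [this, h4]
    simp [dotProduct, mul_ite, Finset.sum_ite_eq', Finset.mul_sum]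
    exact Finset.sum_congr rfl fun i _ => by ring
  -- measurability of s² (Ax ⬝ Ax)
  have hms2 : AEStronglyMeasurable (fun ω => (s ω)^2) μ := hi2.1
  have hmuu : AEStronglyMeasurable (fun ω => A.mulVec (x ω) ⬝ᵥ A.mulVec (x ω)) μ := by
    have he : (fun ω => A.mulVec (x ω) ⬝ᵥ A.mulVec (x ω))
        = fun ω => ∑ k, ∑ i, ∑ j, (A k i * A k j) * (x ω i * x ω j) := by
      funext ω
      simp only [dotProduct, Matrix.mulVec]
      exact Finset.sum_congr rfl fun k _ => by
        rw [Finset.sum_mul_sum]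
        exact Finset.sum_congr rfl fun i _ => Finset.sum_congr rfl fun j _ => by ring
    rw [he]
    exact Finset.aestronglyMeasurable_fun_sum _ fun k _ =>
      Finset.aestronglyMeasurable_fun_sum _ fun i _ =>
        Finset.aestronglyMeasurable_fun_sum _ fun j _ => ((hint2 i j).1.const_mul _)
  have huu_nonneg : ∀ y : Fin m → ℝ, (0:ℝ) ≤ y ⬝ᵥ y := fun y =>
    Finset.sum_nonneg fun k _ => mul_self_nonneg _
  have hxx_nonneg : ∀ y : Fin d → ℝ, (0:ℝ) ≤ y ⬝ᵥ y := fun y =>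
    Finset.sum_nonneg fun k _ => mul_self_nonneg _
  have hbound : ∀ ω, (s ω)^2 * (A.mulVec (x ω) ⬝ᵥ A.mulVec (x ω))
      ≤ matrixOpNorm A ^ 2 * ((s ω)^2 * (x ω ⬝ᵥ x ω)) := by
    intro ω
    calc (s ω)^2 * (A.mulVec (x ω) ⬝ᵥ A.mulVec (x ω))
        ≤ (s ω)^2 * (matrixOpNorm A ^ 2 * (x ω ⬝ᵥ x ω)) :=
          mul_le_mul_of_nonneg_left (opnorm_bound A (x ω)) (sq_nonneg _)
      _ = matrixOpNorm A ^ 2 * ((s ω)^2 * (x ω ⬝ᵥ x ω)) := by ring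
  have hf3 : Integrable (fun ω => (s ω)^2 * (A.mulVec (x ω) ⬝ᵥ A.mulVec (x ω))) μ := by
    refine (hi4.const_mul (matrixOpNorm A ^ 2)).mono (hms2.mul hmuu) ?_
    filter_upwards with ω
    rw [Real.norm_eq_abs, Real.norm_eq_abs,
      abs_of_nonneg (mul_nonneg (sq_nonneg _) (huu_nonneg _))]
    exact (hbound ω).trans (le_abs_self _)
  have hI3 : ∫ ω, (s ω)^2 * (A.mulVec (x ω) ⬝ᵥ A.mulVec (x ω)) ∂μ
      ≤ matrixOpNorm A ^ 2 * (c * (g ⬝ᵥ g)) := by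
    calc ∫ ω, (s ω)^2 * (A.mulVec (x ω) ⬝ᵥ A.mulVec (x ω)) ∂μ
        ≤ ∫ ω, matrixOpNorm A ^ 2 * ((s ω)^2 * (x ω ⬝ᵥ x ω)) ∂μ :=
          integral_mono hf3 (hi4.const_mul _) hbound
      _ = matrixOpNorm A ^ 2 * (c * (g ⬝ᵥ g)) := by rw [integral_const_mul, hv4]
  -- compute the integral
  have hkey : (fun ω => (A.mulVec (v - τ • ((r ⬝ᵥ A.mulVec (x ω)) • x ω)) - b) ⬝ᵥ
      (A.mulVec (v - τ • ((r ⬝ᵥ A.mulVec (x ω)) • x ω)) - b))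
      = fun ω => r ⬝ᵥ r + ((-2*τ) * (s ω)^2
          + τ^2 * ((s ω)^2 * (A.mulVec (x ω) ⬝ᵥ A.mulVec (x ω)))) := funext key
  have hgint : Integrable (fun ω => (-2*τ) * (s ω)^2
      + τ^2 * ((s ω)^2 * (A.mulVec (x ω) ⬝ᵥ A.mulVec (x ω)))) μ :=
    (hi2.const_mul _).add (hf3.const_mul _)
  rw [hkey, integral_add (integrable_const _) hgint,
    integral_add (hi2.const_mul _) (hf3.const_mul _), integral_const_mul, integral_const_mul,
    integral_const, hv2]
  simp only [probReal_univ, smul_eq_mul, one_mul]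
  nlinarith [mul_le_mul_of_nonneg_left hI3 (sq_nonneg τ), sq_nonneg τ]
end

section
/- If λ_min(M) > 0 where M = E(xxᵀ/‖Ax‖²), then the random descent iterates with v^0 = 0 satisfy min_{0 ≤ k ≤ N−1} E(‖Aᵀ(Av^k − b)‖²) ≤ ‖b‖²/(λ_min(M)·N). -/
open MeasureTheory ProbabilityTheory Matrix

/-- One step of random descent with exact linesearch. -/
noncomputable def rdStep {d m : ℕ} (A : Matrix (Fin m) (Fin d) ℝ) (b : Fin m → ℝ)
    (v x : Fin d → ℝ) : Fin d → ℝ :=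
  v - (((A.mulVec v - b) ⬝ᵥ A.mulVec x) / (A.mulVec x ⬝ᵥ A.mulVec x)) • x

lemma rd_aux_dot (d : ℕ) (r u : Fin d → ℝ) :
    (r - ((r ⬝ᵥ u) / (u ⬝ᵥ u)) • u) ⬝ᵥ (r - ((r ⬝ᵥ u) / (u ⬝ᵥ u)) • u)
      = r ⬝ᵥ r - (r ⬝ᵥ u)^2 / (u ⬝ᵥ u) := by
  by_cases h : u ⬝ᵥ u = 0
  · have hu : u = 0 := (dotProduct_self_eq_zero).1 h
    simp [hu]
  · set c := (r ⬝ᵥ u) / (u ⬝ᵥ u) with hc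
    have : (r - c • u) ⬝ᵥ (r - c • u) = r ⬝ᵥ r - 2 * c * (r ⬝ᵥ u) + c^2 * (u ⬝ᵥ u) := by
      simp [dotProduct_sub, sub_dotProduct, smul_dotProduct, dotProduct_smul,
        dotProduct_comm u r, smul_eq_mul]
      ring
    rw [this, hc]
    field_simp
    ring

lemma rd_quad_decomp {d : ℕ} {M : Matrix (Fin d) (Fin d) ℝ} (hA : M.IsHermitian)
    (w : Fin d → ℝ) :
    w ⬝ᵥ w = ∑ i, (((hA.eigenvectorUnitary : Matrix (Fin d) (Fin d) ℝ)ᵀ *ᵥ w) i)^2 ∧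
    w ⬝ᵥ (M *ᵥ w) = ∑ i, hA.eigenvalues i *
      (((hA.eigenvectorUnitary : Matrix (Fin d) (Fin d) ℝ)ᵀ *ᵥ w) i)^2 := by
  set U : Matrix (Fin d) (Fin d) ℝ := (hA.eigenvectorUnitary : Matrix (Fin d) (Fin d) ℝ) with hUdef
  have hstar : star U = Uᵀ := by
    rw [Matrix.star_eq_conjTranspose, conjTranspose_eq_transpose_of_trivial]
  have hU2 : U * Uᵀ = 1 := by
    have h := (Matrix.mem_unitaryGroup_iff).mp hA.eigenvectorUnitary.2
    rw [← hUdef, hstar] at h; exact h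
  have hU1 : Uᵀ * U = 1 := by
    have h := (Matrix.mem_unitaryGroup_iff').mp hA.eigenvectorUnitary.2
    rw [← hUdef, hstar] at h; exact h
  set z : Fin d → ℝ := Uᵀ *ᵥ w with hz
  have hwz : U *ᵥ z = w := by rw [hz, mulVec_mulVec, hU2, one_mulVec]
  constructor
  · conv_lhs => rw [← hwz]
    rw [dotProduct_mulVec, ← mulVec_transpose, mulVec_mulVec, hU1, one_mulVec]
    simp [dotProduct, pow_two]
  · have hM : M = U * diagonal hA.eigenvalues * Uᵀ := by
      have hspec := hA.spectral_theorem
      simp only [Unitary.conjStarAlgAut_apply] at hspec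
      rw [← hUdef, hstar] at hspec
      simpa using hspec
    conv_lhs => rw [hM, ← mulVec_mulVec, ← mulVec_mulVec, ← hz,
      dotProduct_mulVec, ← mulVec_transpose, ← hz]
    simp [dotProduct, mulVec_diagonal, pow_two]
    congr 1; funext i; ring

lemma rd_sInf_quad_le {d : ℕ} {M : Matrix (Fin d) (Fin d) ℝ} (hA : M.IsHermitian)
    (lmin : ℝ)
    (hlmin : lmin = sInf {t : ℝ | ∃ w : Fin d → ℝ, w ≠ 0 ∧ M.mulVec w = t • w})
    (w : Fin d → ℝ) :
    lmin * (w ⬝ᵥ w) ≤ w ⬝ᵥ (M *ᵥ w) := by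
  rcases isEmpty_or_nonempty (Fin d) with hd | hd
  · simp [dotProduct]
  set S := {t : ℝ | ∃ w : Fin d → ℝ, w ≠ 0 ∧ M.mulVec w = t • w} with hS
  set lam := hA.eigenvalues with hlam
  set lm := Finset.univ.inf' (Finset.univ_nonempty) lam with hlm
  -- lm is a lower bound of S
  have hlb : ∀ t ∈ S, lm ≤ t := by
    rintro t ⟨w₀, hw₀, hMw₀⟩
    obtain ⟨hd1, hd2⟩ := rd_quad_decomp hA w₀
    have hquad : w₀ ⬝ᵥ (M *ᵥ w₀) = t * (w₀ ⬝ᵥ w₀) := by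
      rw [hMw₀, dotProduct_smul, smul_eq_mul]
    have hpos : 0 < w₀ ⬝ᵥ w₀ := by
      rcases lt_or_eq_of_le (Finset.sum_nonneg fun i _ => mul_self_nonneg (w₀ i)) with h | h
      · exact h
      · exact absurd ((dotProduct_self_eq_zero).1 h.symm) hw₀
    have hbound : lm * (w₀ ⬝ᵥ w₀) ≤ t * (w₀ ⬝ᵥ w₀) := by
      rw [← hquad, hd2, hd1, Finset.mul_sum]
      refine Finset.sum_le_sum fun i _ => ?_
      exact mul_le_mul_of_nonneg_right (Finset.inf'_le _ (Finset.mem_univ i)) (sq_nonneg _)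
    exact le_of_mul_le_mul_right hbound hpos
  have hmem : ∀ i, lam i ∈ S := by
    intro i
    refine ⟨hA.eigenvectorBasis i, ?_, ?_⟩
    · intro h0
      have h1 := hA.eigenvectorBasis.orthonormal.1 i
      rw [show ((hA.eigenvectorBasis i : EuclideanSpace ℝ (Fin d))) = 0 from by
        apply PiLp.ext; intro j; exact congrFun h0 j] at h1
      simp at h1
    · exact hA.mulVec_eigenvectorBasis i
  have hle : ∀ i, lmin ≤ lam i := fun i =>
    hlmin ▸ csInf_le ⟨lm, fun t ht => hlb t ht⟩ (hmem i)
  obtain ⟨hd1, hd2⟩ := rd_quad_decomp hA w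
  rw [hd1, hd2, Finset.mul_sum]
  exact Finset.sum_le_sum fun i _ =>
    mul_le_mul_of_nonneg_right (hle i) (sq_nonneg _)


lemma rd_measurable_mulVec {d m : ℕ} (A : Matrix (Fin m) (Fin d) ℝ) :
    Measurable (fun v : Fin d → ℝ => A.mulVec v) := by
  apply measurable_pi_lambda
  intro i
  simp only [mulVec, dotProduct]
  exact Finset.measurable_sum _ fun j _ => (measurable_pi_apply j).const_mul _

lemma rd_measurable_dot {d : ℕ} :
    Measurable (fun p : (Fin d → ℝ) × (Fin d → ℝ) => p.1 ⬝ᵥ p.2) := by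
  simp only [dotProduct]
  exact Finset.measurable_sum _ fun j _ =>
    ((measurable_pi_apply j).comp measurable_fst).mul
      ((measurable_pi_apply j).comp measurable_snd)

lemma rd_measurable_step {d m : ℕ} (A : Matrix (Fin m) (Fin d) ℝ) (b : Fin m → ℝ) :
    Measurable (fun p : (Fin d → ℝ) × (Fin d → ℝ) => rdStep A b p.1 p.2) := by
  apply measurable_pi_lambda
  intro i
  simp only [rdStep, Pi.sub_apply, Pi.smul_apply, smul_eq_mul]
  have h1 : Measurable (fun p : (Fin d → ℝ) × (Fin d → ℝ) =>
      (A.mulVec p.1 - b) ⬝ᵥ A.mulVec p.2) := by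
    exact rd_measurable_dot.comp
      ((((rd_measurable_mulVec A).comp measurable_fst).sub measurable_const).prodMk
      ((rd_measurable_mulVec A).comp measurable_snd))
  have h2 : Measurable (fun p : (Fin d → ℝ) × (Fin d → ℝ) =>
      A.mulVec p.2 ⬝ᵥ A.mulVec p.2) := by
    exact rd_measurable_dot.comp
      (((rd_measurable_mulVec A).comp measurable_snd).prodMk
      ((rd_measurable_mulVec A).comp measurable_snd))
  exact ((measurable_pi_apply i).comp measurable_fst).sub
    ((h1.div h2).mul ((measurable_pi_apply i).comp measurable_snd))

/-- the iterate as a function of the first k directions -/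
noncomputable def rdIter {d m : ℕ} (A : Matrix (Fin m) (Fin d) ℝ) (b : Fin m → ℝ) :
    (k : ℕ) → (Fin k → (Fin d → ℝ)) → (Fin d → ℝ)
  | 0, _ => 0
  | (k+1), h => rdStep A b (rdIter A b k (fun i => h i.castSucc)) (h (Fin.last k))

lemma rd_measurable_iter {d m : ℕ} (A : Matrix (Fin m) (Fin d) ℝ) (b : Fin m → ℝ) :
    ∀ k, Measurable (rdIter A b k) := by
  intro k
  induction k with
  | zero => exact measurable_const
  | succ k ih =>
    have : (rdIter A b (k+1)) = (fun p : (Fin d → ℝ) × (Fin d → ℝ) => rdStep A b p.1 p.2) ∘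
        (fun h : Fin (k+1) → (Fin d → ℝ) =>
          (rdIter A b k (fun i => h i.castSucc), h (Fin.last k))) := rfl
    rw [this]
    exact (rd_measurable_step A b).comp
      ((ih.comp (measurable_pi_lambda _ fun i => measurable_pi_apply _)).prodMk
        (measurable_pi_apply _))

/-- if `λ_min(M) > 0` for `M = E(xxᵀ/‖Ax‖²)`, random descent with
`v^0 = 0` and i.i.d. directions satisfies
`min_{0 ≤ k ≤ N−1} E(‖Aᵀ(Av^k − b)‖²) ≤ ‖b‖²/(λ_min(M)·N)`. -/
theorem rd_sublinear_normal_equation_residual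
    {d m : ℕ} {Ω : Type*} [MeasurableSpace Ω] (μ : Measure Ω) [IsProbabilityMeasure μ]
    (A : Matrix (Fin m) (Fin d) ℝ) (b : Fin m → ℝ)
    (x : ℕ → Ω → Fin d → ℝ)
    (hxmeas : ∀ k, Measurable (x k))
    (hindep : iIndepFun x μ)
    (M : Matrix (Fin d) (Fin d) ℝ)
    (hMint : ∀ k i j, Integrable
        (fun ω => x k ω i * x k ω j / (A.mulVec (x k ω) ⬝ᵥ A.mulVec (x k ω))) μ)
    (hM : ∀ k i j, ∫ ω, x k ω i * x k ω j / (A.mulVec (x k ω) ⬝ᵥ A.mulVec (x k ω)) ∂μ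
        = M i j)
    (lmin : ℝ)
    (hlmin : lmin = sInf {t : ℝ | ∃ w : Fin d → ℝ, w ≠ 0 ∧ M.mulVec w = t • w})
    (hpos : 0 < lmin)
    (v : ℕ → Ω → Fin d → ℝ)
    (hv0 : ∀ ω, v 0 ω = 0)
    (hstep : ∀ k ω, v (k + 1) ω = rdStep A b (v k ω) (x k ω))
    (N : ℕ) (hN : 0 < N) :
    ∃ k < N, ∫ ω, (Aᵀ.mulVec (A.mulVec (v k ω) - b)) ⬝ᵥ
          (Aᵀ.mulVec (A.mulVec (v k ω) - b)) ∂μ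
        ≤ (b ⬝ᵥ b) / (lmin * N) := by
  classical
  set r : ℕ → Ω → Fin m → ℝ := fun k ω => A.mulVec (v k ω) - b with hr
  set y : ℕ → Ω → Fin d → ℝ := fun k ω => Aᵀ.mulVec (r k ω) with hy
  set u : ℕ → Ω → Fin m → ℝ := fun k ω => A.mulVec (x k ω) with hu
  set D : ℕ → Ω → ℝ := fun k ω => (r k ω ⬝ᵥ u k ω)^2 / (u k ω ⬝ᵥ u k ω) with hD
  set q : ℕ → Fin d → Fin d → Ω → ℝ :=
    fun k i j ω => x k ω i * x k ω j / (u k ω ⬝ᵥ u k ω) with hq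
  -- Hermitian
  have h_herm : M.IsHermitian := by
    refine Matrix.ext fun i j => ?_
    rw [conjTranspose_apply, star_trivial, ← hM 0 j i, ← hM 0 i j]
    congr 1; funext ω; rw [mul_comm (x 0 ω j)]
  -- recursion for the residual
  have h_rrec : ∀ k ω, r (k+1) ω
      = r k ω - ((r k ω ⬝ᵥ u k ω)/(u k ω ⬝ᵥ u k ω)) • u k ω := by
    intro k ω
    simp only [hr, hu, hstep k ω, rdStep, mulVec_sub, mulVec_smul]
    rw [sub_right_comm]
  have h_dec : ∀ k ω, r (k+1) ω ⬝ᵥ r (k+1) ω = r k ω ⬝ᵥ r k ω - D k ω := by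
    intro k ω
    rw [h_rrec k ω, rd_aux_dot]
  have h_Dnn : ∀ k ω, 0 ≤ D k ω := by
    intro k ω
    exact div_nonneg (sq_nonneg _) (Finset.sum_nonneg fun i _ => mul_self_nonneg _)
  have h_rb : ∀ k ω, r k ω ⬝ᵥ r k ω ≤ b ⬝ᵥ b := by
    intro k ω
    induction k with
    | zero =>
      have h0 : r 0 ω = -b := by simp [hr, hv0, mulVec_zero]
      rw [h0, neg_dotProduct, dotProduct_neg, neg_neg]
    | succ k ih =>
      rw [h_dec k ω]
      linarith [h_Dnn k ω]
  have h_veq : ∀ k ω, v k ω = rdIter A b k (fun i => x i ω) := by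
    intro k
    induction k with
    | zero => intro ω; simp [hv0, rdIter]
    | succ k ih =>
      intro ω
      rw [hstep k ω, ih ω]
      simp [rdIter, Fin.coe_castSucc, Fin.val_last]
  have h_vmeas : ∀ k, Measurable (v k) := by
    intro k
    have hvk : v k = (rdIter A b k) ∘ (fun ω (i : Fin k) => x i ω) :=
      funext fun ω => h_veq k ω
    rw [hvk]
    exact (rd_measurable_iter A b k).comp (measurable_pi_lambda _ fun i => hxmeas i)
  have h_ymeas : ∀ k, Measurable (fun ω => y k ω) := by
    intro k
    exact (rd_measurable_mulVec Aᵀ).comp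
      (((rd_measurable_mulVec A).comp (h_vmeas k)).sub measurable_const)
  set C : ℝ := (∑ j, ∑ i, |A j i|) * Real.sqrt (b ⬝ᵥ b) with hC
  have h_yb : ∀ k ω i, |y k ω i| ≤ C := by
    intro k ω i
    have hrj : ∀ j, |r k ω j| ≤ Real.sqrt (b ⬝ᵥ b) := by
      intro j
      have h1 : r k ω j * r k ω j ≤ r k ω ⬝ᵥ r k ω := by
        have := Finset.single_le_sum (f := fun j' => r k ω j' * r k ω j')
          (fun j' _ => mul_self_nonneg _) (Finset.mem_univ j)
        simpa [dotProduct] using this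
      calc |r k ω j| = Real.sqrt ((r k ω j)^2) := (Real.sqrt_sq_eq_abs _).symm
        _ ≤ Real.sqrt (b ⬝ᵥ b) := by
          refine Real.sqrt_le_sqrt ?_
          rw [pow_two]
          exact le_trans h1 (h_rb k ω)
    calc |y k ω i| = abs (∑ j, A j i * r k ω j) := by
              simp [hy, mulVec, dotProduct, transpose_apply]
      _ ≤ ∑ j, |A j i * r k ω j| := Finset.abs_sum_le_sum_abs _ _
      _ ≤ ∑ j, |A j i| * Real.sqrt (b ⬝ᵥ b) := by
        refine Finset.sum_le_sum fun j _ => ?_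
        rw [abs_mul]
        exact mul_le_mul_of_nonneg_left (hrj j) (abs_nonneg _)
      _ = (∑ j, |A j i|) * Real.sqrt (b ⬝ᵥ b) := by rw [Finset.sum_mul]
      _ ≤ C := by
        rw [hC]
        refine mul_le_mul_of_nonneg_right ?_ (Real.sqrt_nonneg _)
        refine Finset.sum_le_sum fun j _ => ?_
        exact Finset.single_le_sum (f := fun i' => |A j i'|)
          (fun i' _ => abs_nonneg _) (Finset.mem_univ i)
  have h_yint : ∀ k i j, Integrable (fun ω => y k ω i * y k ω j) μ := by
    intro k i j
    refine Integrable.mono' (integrable_const (C^2)) ?_ (ae_of_all _ fun ω => ?_)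
    · exact (((measurable_pi_apply i).comp (h_ymeas k)).mul
        ((measurable_pi_apply j).comp (h_ymeas k))).aestronglyMeasurable
    · rw [Real.norm_eq_abs, abs_mul]
      have h1 := h_yb k ω i; have h2 := h_yb k ω j
      have h3 : |y k ω i| * |y k ω j| ≤ C * C :=
        mul_le_mul h1 h2 (abs_nonneg _) (le_trans (abs_nonneg _) h1)
      simpa [pow_two] using h3
  have h_indep : ∀ k i j, IndepFun (fun ω => y k ω i * y k ω j) (q k i j) μ := by
    intro k i j
    have hdisj : Disjoint (Finset.range k) ({k} : Finset ℕ) := by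
      simp [Finset.disjoint_singleton_right]
    have base := hindep.indepFun_finset (Finset.range k) {k} hdisj hxmeas
    set φ : ((i' : (Finset.range k : Finset ℕ)) → (Fin d → ℝ)) → ℝ :=
      fun h =>
        (Aᵀ *ᵥ (A *ᵥ (rdIter A b k (fun i' : Fin k =>
          h ⟨(i' : ℕ), Finset.mem_range.2 i'.isLt⟩)) - b)) i *
        (Aᵀ *ᵥ (A *ᵥ (rdIter A b k (fun i' : Fin k =>
          h ⟨(i' : ℕ), Finset.mem_range.2 i'.isLt⟩)) - b)) j with hφ
    set ψ : ((i' : ({k} : Finset ℕ)) → (Fin d → ℝ)) → ℝ :=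
      fun h => h ⟨k, Finset.mem_singleton_self k⟩ i * h ⟨k, Finset.mem_singleton_self k⟩ j /
        (A *ᵥ h ⟨k, Finset.mem_singleton_self k⟩ ⬝ᵥ A *ᵥ h ⟨k, Finset.mem_singleton_self k⟩)
      with hψ
    have hF : Measurable (fun vv : Fin d → ℝ =>
        (Aᵀ *ᵥ (A *ᵥ vv - b)) i * (Aᵀ *ᵥ (A *ᵥ vv - b)) j) := by
      have h0 : Measurable (fun vv : Fin d → ℝ => Aᵀ *ᵥ (A *ᵥ vv - b)) :=
        (rd_measurable_mulVec Aᵀ).comp ((rd_measurable_mulVec A).sub measurable_const)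
      exact ((measurable_pi_apply i).comp h0).mul ((measurable_pi_apply j).comp h0)
    have hρ : Measurable (fun (h : ↥(Finset.range k) → (Fin d → ℝ))
        (i' : Fin k) => h ⟨(i' : ℕ), Finset.mem_range.2 i'.isLt⟩) :=
      measurable_pi_lambda _ fun i' => measurable_pi_apply _
    have hφm : Measurable φ := hF.comp ((rd_measurable_iter A b k).comp hρ)
    have hev : Measurable (fun (h : ({k} : Finset ℕ) → (Fin d → ℝ)) =>
        h ⟨k, Finset.mem_singleton_self k⟩) := measurable_pi_apply _
    have hψm : Measurable ψ :=
      (((measurable_pi_apply i).comp hev).mul ((measurable_pi_apply j).comp hev)).div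
        (rd_measurable_dot.comp (((rd_measurable_mulVec A).comp hev).prodMk
          ((rd_measurable_mulVec A).comp hev)))
    have hcomp := base.comp hφm hψm
    have hl : (φ ∘ fun a (i' : (Finset.range k : Finset ℕ)) => x i' a)
        = fun ω => y k ω i * y k ω j := by
      funext ω
      show (Aᵀ *ᵥ (A *ᵥ (rdIter A b k (fun i' : Fin k => x i' ω)) - b)) i *
           (Aᵀ *ᵥ (A *ᵥ (rdIter A b k (fun i' : Fin k => x i' ω)) - b)) j
         = y k ω i * y k ω j
      rw [← h_veq k ω]
    have hrgt : (ψ ∘ fun a (i' : (({k} : Finset ℕ) : Finset ℕ)) => x i' a) = q k i j := rfl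
    rw [hl, hrgt] at hcomp
    exact hcomp
  have h_mul : ∀ k i j, ∫ ω, (y k ω i * y k ω j) * q k i j ω ∂μ
      = (∫ ω, y k ω i * y k ω j ∂μ) * M i j := by
    intro k i j
    have h2 : ∫ ω, q k i j ω ∂μ = M i j := hM k i j
    calc ∫ ω, (y k ω i * y k ω j) * q k i j ω ∂μ
        = (∫ ω, y k ω i * y k ω j ∂μ) * ∫ ω, q k i j ω ∂μ :=
          (h_indep k i j).integral_fun_mul_eq_mul_integral (h_yint k i j).aestronglyMeasurable
            (hMint k i j).aestronglyMeasurable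
      _ = (∫ ω, y k ω i * y k ω j ∂μ) * M i j := by rw [h2]
  have h_Dsum : ∀ k ω, D k ω = ∑ i, ∑ j, (y k ω i * y k ω j) * q k i j ω := by
    intro k ω
    have hru : r k ω ⬝ᵥ u k ω = y k ω ⬝ᵥ x k ω := by
      show r k ω ⬝ᵥ (A *ᵥ x k ω) = (Aᵀ *ᵥ r k ω) ⬝ᵥ x k ω
      rw [dotProduct_mulVec, mulVec_transpose]
    show (r k ω ⬝ᵥ u k ω)^2 / (u k ω ⬝ᵥ u k ω) = _
    rw [hru]
    have hsq : (y k ω ⬝ᵥ x k ω)^2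
        = ∑ i, ∑ j, (y k ω i * y k ω j) * (x k ω i * x k ω j) := by
      simp only [dotProduct, pow_two, Finset.sum_mul_sum]
      exact Finset.sum_congr rfl fun i _ => Finset.sum_congr rfl fun j _ => by ring
    rw [hsq, Finset.sum_div]
    refine Finset.sum_congr rfl fun i _ => ?_
    rw [Finset.sum_div]
    refine Finset.sum_congr rfl fun j _ => ?_
    show (y k ω i * y k ω j) * (x k ω i * x k ω j) / (u k ω ⬝ᵥ u k ω) = _
    rw [mul_div_assoc]
  have h_term_int : ∀ k i j, Integrable (fun ω => (y k ω i * y k ω j) * q k i j ω) μ := by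
    intro k i j
    refine (hMint k i j).bdd_mul (c := C^2) (((measurable_pi_apply i).comp (h_ymeas k)).mul
      ((measurable_pi_apply j).comp (h_ymeas k))).aestronglyMeasurable (ae_of_all _ fun ω => ?_)
    rw [Real.norm_eq_abs, abs_mul]
    have h1 := h_yb k ω i; have h2 := h_yb k ω j
    have h3 : |y k ω i| * |y k ω j| ≤ C * C :=
      mul_le_mul h1 h2 (abs_nonneg _) (le_trans (abs_nonneg _) h1)
    calc |y k ω i| * |y k ω j| ≤ C * C := h3
      _ = C^2 := (pow_two C).symm
  have h_Dint : ∀ k, Integrable (D k) μ := by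
    intro k
    have hDk : D k = fun ω => ∑ i, ∑ j, (y k ω i * y k ω j) * q k i j ω :=
      funext fun ω => h_Dsum k ω
    rw [hDk]
    exact integrable_finset_sum _ fun i _ => integrable_finset_sum _ fun j _ =>
      h_term_int k i j
  have h_ED : ∀ k, ∫ ω, D k ω ∂μ = ∑ i, ∑ j, (∫ ω, y k ω i * y k ω j ∂μ) * M i j := by
    intro k
    have h1 : ∫ ω, D k ω ∂μ = ∫ ω, ∑ i, ∑ j, (y k ω i * y k ω j) * q k i j ω ∂μ :=
      integral_congr_ae (ae_of_all _ fun ω => h_Dsum k ω)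
    rw [h1, integral_finset_sum _
      (fun i _ => integrable_finset_sum _ fun j _ => h_term_int k i j)]
    refine Finset.sum_congr rfl fun i _ => ?_
    rw [integral_finset_sum _ (fun j _ => h_term_int k i j)]
    exact Finset.sum_congr rfl fun j _ => h_mul k i j
  have h_yyint : ∀ k, Integrable (fun ω => y k ω ⬝ᵥ y k ω) μ := by
    intro k
    have hyy : (fun ω => y k ω ⬝ᵥ y k ω) = fun ω => ∑ i, y k ω i * y k ω i := by
      funext ω; simp [dotProduct]
    rw [hyy]
    exact integrable_finset_sum _ fun i _ => h_yint k i i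
  have h_lower : ∀ k, lmin * ∫ ω, y k ω ⬝ᵥ y k ω ∂μ ≤ ∫ ω, D k ω ∂μ := by
    intro k
    have hquadeq : (fun ω => y k ω ⬝ᵥ (M *ᵥ y k ω))
        = fun ω => ∑ i, ∑ j, M i j * (y k ω i * y k ω j) := by
      funext ω
      simp only [dotProduct, mulVec, Finset.mul_sum]
      exact Finset.sum_congr rfl fun i _ => Finset.sum_congr rfl fun j _ => by ring
    have hMyint : Integrable (fun ω => y k ω ⬝ᵥ (M *ᵥ y k ω)) μ := by
      rw [hquadeq]
      exact integrable_finset_sum _ fun i _ => integrable_finset_sum _ fun j _ =>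
        (h_yint k i j).const_mul _
    have h2 : ∫ ω, y k ω ⬝ᵥ (M *ᵥ y k ω) ∂μ
        = ∑ i, ∑ j, M i j * ∫ ω, y k ω i * y k ω j ∂μ := by
      rw [hquadeq, integral_finset_sum _
        (fun i _ => integrable_finset_sum _ fun j _ => (h_yint k i j).const_mul (M i j))]
      refine Finset.sum_congr rfl fun i _ => ?_
      rw [integral_finset_sum _ (fun j _ => (h_yint k i j).const_mul (M i j))]
      exact Finset.sum_congr rfl fun j _ => integral_const_mul _ _
    have hEq : ∫ ω, y k ω ⬝ᵥ (M *ᵥ y k ω) ∂μ = ∫ ω, D k ω ∂μ := by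
      rw [h2, h_ED k]
      exact Finset.sum_congr rfl fun i _ => Finset.sum_congr rfl fun j _ => mul_comm _ _
    calc lmin * ∫ ω, y k ω ⬝ᵥ y k ω ∂μ
        = ∫ ω, lmin * (y k ω ⬝ᵥ y k ω) ∂μ := (integral_const_mul _ _).symm
      _ ≤ ∫ ω, y k ω ⬝ᵥ (M *ᵥ y k ω) ∂μ :=
        integral_mono ((h_yyint k).const_mul lmin) hMyint
          (fun ω => rd_sInf_quad_le h_herm lmin hlmin (y k ω))
      _ = ∫ ω, D k ω ∂μ := hEq
  have h_rrint : ∀ k, Integrable (fun ω => r k ω ⬝ᵥ r k ω) μ := by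
    intro k
    refine Integrable.mono' (integrable_const (b ⬝ᵥ b)) ?_ (ae_of_all _ fun ω => ?_)
    · have hrm : Measurable (fun ω => r k ω) :=
        ((rd_measurable_mulVec A).comp (h_vmeas k)).sub measurable_const
      exact (rd_measurable_dot.comp (hrm.prodMk hrm)).aestronglyMeasurable
    · rw [Real.norm_eq_abs, abs_of_nonneg (Finset.sum_nonneg fun i _ => mul_self_nonneg _)]
      exact h_rb k ω
  have h_tel : ∀ k, ∫ ω, D k ω ∂μ
      = (∫ ω, r k ω ⬝ᵥ r k ω ∂μ) - ∫ ω, r (k+1) ω ⬝ᵥ r (k+1) ω ∂μ := by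
    intro k
    have h1 : ∫ ω, r (k+1) ω ⬝ᵥ r (k+1) ω ∂μ = ∫ ω, (r k ω ⬝ᵥ r k ω - D k ω) ∂μ :=
      integral_congr_ae (ae_of_all _ fun ω => h_dec k ω)
    rw [h1, integral_sub (h_rrint k) (h_Dint k)]
    ring
  have h_sum : ∑ k ∈ Finset.range N, ∫ ω, D k ω ∂μ ≤ b ⬝ᵥ b := by
    calc ∑ k ∈ Finset.range N, ∫ ω, D k ω ∂μ
        = (∫ ω, r 0 ω ⬝ᵥ r 0 ω ∂μ) - ∫ ω, r N ω ⬝ᵥ r N ω ∂μ := by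
          rw [Finset.sum_congr rfl fun k _ => h_tel k]
          exact Finset.sum_range_sub' (fun k => ∫ ω, r k ω ⬝ᵥ r k ω ∂μ) N
      _ ≤ ∫ ω, r 0 ω ⬝ᵥ r 0 ω ∂μ := by
          have h3 : 0 ≤ ∫ ω, r N ω ⬝ᵥ r N ω ∂μ :=
            integral_nonneg fun ω => Finset.sum_nonneg fun i _ => mul_self_nonneg _
          linarith
      _ = b ⬝ᵥ b := by
          have h4 : ∀ ω, r 0 ω ⬝ᵥ r 0 ω = b ⬝ᵥ b := by
            intro ω
            have h5 : r 0 ω = -b := by simp [hr, hv0, mulVec_zero]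
            rw [h5, neg_dotProduct, dotProduct_neg, neg_neg]
          rw [integral_congr_ae (ae_of_all _ h4), integral_const]
          simp
  -- conclusion
  set Y : ℕ → ℝ := fun k => ∫ ω, y k ω ⬝ᵥ y k ω ∂μ with hY
  have h_main : lmin * ∑ k ∈ Finset.range N, Y k ≤ b ⬝ᵥ b := by
    rw [Finset.mul_sum]
    exact le_trans (Finset.sum_le_sum fun k _ => h_lower k) h_sum
  obtain ⟨k0, hk0mem, hk0min⟩ := Finset.exists_min_image (Finset.range N) Y
    ⟨0, Finset.mem_range.2 hN⟩
  refine ⟨k0, Finset.mem_range.1 hk0mem, ?_⟩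
  have hkey : (N : ℝ) * Y k0 ≤ ∑ k ∈ Finset.range N, Y k := by
    have := Finset.card_nsmul_le_sum (Finset.range N) Y (Y k0)
      (fun i hi => hk0min i hi)
    simpa [Finset.card_range, nsmul_eq_mul] using this
  have hlN : (0:ℝ) < lmin * N := mul_pos hpos (by exact_mod_cast hN)
  have hgoal : Y k0 ≤ (b ⬝ᵥ b) / (lmin * N) := by
    rw [le_div_iff₀ hlN]
    calc Y k0 * (lmin * N) = lmin * ((N:ℝ) * Y k0) := by ring
      _ ≤ lmin * ∑ k ∈ Finset.range N, Y k :=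
        mul_le_mul_of_nonneg_left hkey hpos.le
      _ ≤ b ⬝ᵥ b := h_main
  exact hgoal
end

section
/- For random descent iterates, E(‖Av^{k+1} − b‖²) ≤ (1 − λ_min(M)σ_min(A)²)·E(‖Av^k − b‖²) and also E(‖Av^{k+1} − b‖²) ≤ (1 − λ_min(A M Aᵀ))·E(‖Av^k − b‖²), where M = E(xxᵀ/‖Ax‖²). -/
open MeasureTheory ProbabilityTheory Matrix

/-- The smallest positive singular value of `A`. -/
noncomputable def sigmaMinPos {m d : ℕ} (A : Matrix (Fin m) (Fin d) ℝ) : ℝ :=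
  sInf {s : ℝ | 0 < s ∧ ∃ w : Fin d → ℝ, w ≠ 0 ∧ (Aᵀ * A).mulVec w = (s ^ 2) • w}


lemma inner_eq_dot {n : ℕ} (x y : EuclideanSpace ℝ (Fin n)) :
    (inner ℝ x y : ℝ) = (x : Fin n → ℝ) ⬝ᵥ (y : Fin n → ℝ) := by
  simp [PiLp.inner_apply, dotProduct, RCLike.inner_apply, mul_comm]

lemma sum_sq_coords {n : ℕ} {B : Matrix (Fin n) (Fin n) ℝ} (hB : B.IsHermitian) (r : Fin n → ℝ) :
    r ⬝ᵥ r = ∑ i, ((hB.eigenvectorBasis i : Fin n → ℝ) ⬝ᵥ r) ^ 2 := by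
  have h := hB.eigenvectorBasis.sum_inner_mul_inner
    ((WithLp.equiv 2 (Fin n → ℝ)).symm r) ((WithLp.equiv 2 (Fin n → ℝ)).symm r)
  simp only [inner_eq_dot] at h
  have e : ((WithLp.equiv 2 (Fin n → ℝ)).symm r : Fin n → ℝ) = r := rfl
  rw [e] at h
  rw [← h]
  refine Finset.sum_congr rfl fun i _ => ?_
  rw [dotProduct_comm r]
  ring

lemma quad_form_eigen {n : ℕ} {B : Matrix (Fin n) (Fin n) ℝ} (hB : B.IsHermitian) (r : Fin n → ℝ) :
    r ⬝ᵥ (B.mulVec r) = ∑ i, hB.eigenvalues i * ((hB.eigenvectorBasis i : Fin n → ℝ) ⬝ᵥ r) ^ 2 := by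
  have h := hB.eigenvectorBasis.sum_inner_mul_inner
    ((WithLp.equiv 2 (Fin n → ℝ)).symm r) ((WithLp.equiv 2 (Fin n → ℝ)).symm (B.mulVec r))
  simp only [inner_eq_dot] at h
  have e : ((WithLp.equiv 2 (Fin n → ℝ)).symm r : Fin n → ℝ) = r := rfl
  have e2 : ((WithLp.equiv 2 (Fin n → ℝ)).symm (B.mulVec r) : Fin n → ℝ) = B.mulVec r := rfl
  rw [e, e2] at h
  rw [← h]
  refine Finset.sum_congr rfl fun i _ => ?_
  have hBT : Bᵀ = B := by
    have := hB.eq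
    rwa [Matrix.conjTranspose_eq_transpose_of_trivial] at this
  have hu : (hB.eigenvectorBasis i : Fin n → ℝ) ⬝ᵥ B.mulVec r
      = hB.eigenvalues i * ((hB.eigenvectorBasis i : Fin n → ℝ) ⬝ᵥ r) := by
    rw [Matrix.dotProduct_mulVec, ← Matrix.mulVec_transpose, hBT]
    erw [hB.mulVec_eigenvectorBasis]
    rw [smul_dotProduct]
    rfl
  rw [hu, dotProduct_comm r]
  ring

lemma dotProduct_self_nonneg' {n : ℕ} (w : Fin n → ℝ) : (0:ℝ) ≤ w ⬝ᵥ w :=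
  Finset.sum_nonneg fun i _ => mul_self_nonneg _

lemma dotProduct_self_pos {n : ℕ} {w : Fin n → ℝ} (hw : w ≠ 0) : (0:ℝ) < w ⬝ᵥ w :=
  lt_of_le_of_ne (dotProduct_self_nonneg' w) (fun h => hw (dotProduct_self_eq_zero.mp h.symm))

/-- basis vectors as plain functions are nonzero -/
lemma eigvec_ne_zero {n : ℕ} {B : Matrix (Fin n) (Fin n) ℝ} (hB : B.IsHermitian) (i : Fin n) :
    (hB.eigenvectorBasis i : Fin n → ℝ) ≠ 0 := by
  intro h
  have := hB.eigenvectorBasis.orthonormal.ne_zero i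
  apply this
  ext j
  exact congrFun h j

lemma quad_lower {n : ℕ} {B : Matrix (Fin n) (Fin n) ℝ} (hB : B.IsHermitian) (r : Fin n → ℝ) :
    sInf {t : ℝ | ∃ w : Fin n → ℝ, w ≠ 0 ∧ B.mulVec w = t • w} * (r ⬝ᵥ r)
      ≤ r ⬝ᵥ B.mulVec r := by
  rcases Nat.eq_zero_or_pos n with hn | hn
  · subst hn
    simp [dotProduct]
  · have hne : Nonempty (Fin n) := ⟨⟨0, hn⟩⟩
    set S := {t : ℝ | ∃ w : Fin n → ℝ, w ≠ 0 ∧ B.mulVec w = t • w} with hS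
    set lmin := Finset.univ.inf' (Finset.univ_nonempty) hB.eigenvalues with hlm
    -- every t ∈ S is ≥ lmin
    have hlb : ∀ t ∈ S, lmin ≤ t := by
      rintro t ⟨w, hw, hwe⟩
      have hq : w ⬝ᵥ B.mulVec w = t * (w ⬝ᵥ w) := by
        rw [hwe, dotProduct_smul]; rfl
      have hq2 := quad_form_eigen hB w
      have hge : lmin * (w ⬝ᵥ w) ≤ w ⬝ᵥ B.mulVec w := by
        rw [hq2, sum_sq_coords hB w, Finset.mul_sum]
        refine Finset.sum_le_sum fun i _ => ?_
        exact mul_le_mul_of_nonneg_right (Finset.inf'_le _ (Finset.mem_univ i)) (sq_nonneg _)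
      have hpos : 0 < w ⬝ᵥ w := dotProduct_self_pos hw
      nlinarith [hge, hq, hpos]
    -- lmin ∈ S
    have hmem : lmin ∈ S := by
      obtain ⟨i, _, hi⟩ := Finset.exists_mem_eq_inf' (Finset.univ_nonempty) hB.eigenvalues
      refine ⟨hB.eigenvectorBasis i, eigvec_ne_zero hB i, ?_⟩
      rw [hlm, hi]
      erw [hB.mulVec_eigenvectorBasis i]
    have : sInf S = lmin := le_antisymm (csInf_le ⟨lmin, hlb⟩ hmem) (le_csInf ⟨lmin, hmem⟩ hlb)
    rw [this, quad_form_eigen hB r, sum_sq_coords hB r, Finset.mul_sum]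
    refine Finset.sum_le_sum fun i _ => ?_
    exact mul_le_mul_of_nonneg_right (Finset.inf'_le _ (Finset.mem_univ i)) (sq_nonneg _)

lemma sigmaMinPos_nonneg {m d : ℕ} (A : Matrix (Fin m) (Fin d) ℝ) : 0 ≤ sigmaMinPos A :=
  Real.sInf_nonneg (fun s hs => le_of_lt hs.1)

lemma sInf_nonneg_of_psd {n : ℕ} {B : Matrix (Fin n) (Fin n) ℝ}
    (hpsd : ∀ w : Fin n → ℝ, 0 ≤ w ⬝ᵥ B.mulVec w) :
    0 ≤ sInf {t : ℝ | ∃ w : Fin n → ℝ, w ≠ 0 ∧ B.mulVec w = t • w} := by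
  refine Real.sInf_nonneg ?_
  rintro t ⟨w, hw, hwe⟩
  have h1 : w ⬝ᵥ B.mulVec w = t * (w ⬝ᵥ w) := by rw [hwe, dotProduct_smul]; rfl
  have h2 := hpsd w
  have hp := dotProduct_self_pos hw
  nlinarith

lemma sigma_bound {m d : ℕ} (A : Matrix (Fin m) (Fin d) ℝ) (u : Fin d → ℝ) :
    sigmaMinPos A ^ 2 * (A.mulVec u ⬝ᵥ A.mulVec u)
      ≤ (Aᵀ.mulVec (A.mulVec u)) ⬝ᵥ (Aᵀ.mulVec (A.mulVec u)) := by
  have hB : (A * Aᵀ).IsHermitian := by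
    unfold Matrix.IsHermitian
    rw [Matrix.conjTranspose_eq_transpose_of_trivial, Matrix.transpose_mul,
      Matrix.transpose_transpose]
  set r := A.mulVec u with hr
  -- RHS = r ⬝ᵥ (A*Aᵀ) *ᵥ r
  have hRHS : (Aᵀ.mulVec r) ⬝ᵥ (Aᵀ.mulVec r) = r ⬝ᵥ (A * Aᵀ).mulVec r := by
    rw [← Matrix.mulVec_mulVec, Matrix.dotProduct_mulVec r, ← Matrix.mulVec_transpose]
  rw [hRHS, quad_form_eigen hB r, sum_sq_coords hB r, Finset.mul_sum]
  refine Finset.sum_le_sum fun i _ => ?_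
  set μ := hB.eigenvalues i with hμ
  set ui := (hB.eigenvectorBasis i : Fin m → ℝ) with hui
  have huinorm : ui ⬝ᵥ ui = 1 := by
    have := hB.eigenvectorBasis.orthonormal.1 i
    have h2 : (inner ℝ (hB.eigenvectorBasis i) (hB.eigenvectorBasis i) : ℝ) = 1 := by
      rw [real_inner_self_eq_norm_sq, this]; norm_num
    rw [inner_eq_dot] at h2
    exact h2
  have hBui : (A * Aᵀ).mulVec ui = μ • ui := by
    erw [hB.mulVec_eigenvectorBasis i]
  have hquad : ui ⬝ᵥ (A * Aᵀ).mulVec ui = μ := by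
    rw [hBui, dotProduct_smul, smul_eq_mul, huinorm, mul_one]
  have hquad2 : ui ⬝ᵥ (A * Aᵀ).mulVec ui = (Aᵀ.mulVec ui) ⬝ᵥ (Aᵀ.mulVec ui) := by
    rw [← Matrix.mulVec_mulVec, Matrix.dotProduct_mulVec ui, ← Matrix.mulVec_transpose]
  have hμnn : 0 ≤ μ := by rw [← hquad, hquad2]; exact dotProduct_self_nonneg' _
  rcases eq_or_lt_of_le hμnn with hμ0 | hμpos
  · -- μ = 0 : then Aᵀ ui = 0 and the coordinate vanishes
    have hAtu : Aᵀ.mulVec ui = 0 := by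
      have : (Aᵀ.mulVec ui) ⬝ᵥ (Aᵀ.mulVec ui) = 0 := by rw [← hquad2, hquad, ← hμ0]
      exact dotProduct_self_eq_zero.mp this
    have hc : ui ⬝ᵥ r = 0 := by
      rw [hr, Matrix.dotProduct_mulVec ui, ← Matrix.mulVec_transpose, hAtu,
        zero_dotProduct]
    rw [hc]
    simp
  · -- μ > 0 : σmin² ≤ μ
    have hs : Real.sqrt μ ∈ {s : ℝ | 0 < s ∧ ∃ w : Fin d → ℝ, w ≠ 0 ∧
        (Aᵀ * A).mulVec w = (s ^ 2) • w} := by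
      refine ⟨Real.sqrt_pos.mpr hμpos, Aᵀ.mulVec ui, ?_, ?_⟩
      · intro h
        have : ui ⬝ᵥ (A * Aᵀ).mulVec ui = 0 := by
          rw [hquad2, h, zero_dotProduct]
        rw [hquad] at this
        exact absurd this (ne_of_gt hμpos)
      · rw [Real.sq_sqrt (le_of_lt hμpos)]
        have e1 : (Aᵀ * A) *ᵥ (Aᵀ *ᵥ ui) = Aᵀ *ᵥ ((A * Aᵀ) *ᵥ ui) := by
          simp [Matrix.mulVec_mulVec, Matrix.mul_assoc]
        rw [e1, hBui, Matrix.mulVec_smul]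
    have hle : sigmaMinPos A ≤ Real.sqrt μ :=
      csInf_le ⟨0, fun s hs' => le_of_lt hs'.1⟩ hs
    have h2 : sigmaMinPos A ^ 2 ≤ μ := by
      have := sq_le_sq' (by nlinarith [sigmaMinPos_nonneg A, Real.sqrt_nonneg μ]) hle
      rwa [Real.sq_sqrt (le_of_lt hμpos)] at this
    exact mul_le_mul_of_nonneg_right h2 (sq_nonneg _)

section Meas
variable {d m : ℕ} (A : Matrix (Fin m) (Fin d) ℝ) (b : Fin m → ℝ)

lemma measurable_mulVec : Measurable (fun v : Fin d → ℝ => A.mulVec v) := by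
  refine measurable_pi_lambda _ fun i => ?_
  simp only [Matrix.mulVec, dotProduct]
  exact Finset.measurable_sum _ fun j _ => (measurable_const.mul (measurable_pi_apply j))

lemma measurable_dotProduct {n : ℕ} :
    Measurable (fun p : (Fin n → ℝ) × (Fin n → ℝ) => p.1 ⬝ᵥ p.2) := by
  simp only [dotProduct]
  exact Finset.measurable_sum _ fun j _ =>
    ((measurable_pi_apply j).comp measurable_fst).mul ((measurable_pi_apply j).comp measurable_snd)

lemma measurable_rdStep :
    Measurable (fun p : (Fin d → ℝ) × (Fin d → ℝ) => rdStep A b p.1 p.2) := by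
  refine measurable_pi_lambda _ fun i => ?_
  simp only [rdStep, Pi.sub_apply, Pi.smul_apply, smul_eq_mul]
  have h1 : Measurable fun p : (Fin d → ℝ) × (Fin d → ℝ) =>
      (A.mulVec p.1 - b) ⬝ᵥ A.mulVec p.2 :=
    measurable_dotProduct.comp
      ((((measurable_mulVec A).comp measurable_fst).sub measurable_const).prodMk
        ((measurable_mulVec A).comp measurable_snd))
  have h2 : Measurable fun p : (Fin d → ℝ) × (Fin d → ℝ) =>
      A.mulVec p.2 ⬝ᵥ A.mulVec p.2 :=
    measurable_dotProduct.comp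
      (((measurable_mulVec A).comp measurable_snd).prodMk
        ((measurable_mulVec A).comp measurable_snd))
  exact ((measurable_pi_apply i).comp measurable_fst).sub
    ((h1.div h2).mul ((measurable_pi_apply i).comp measurable_snd))

noncomputable def vseq (v0 : Fin d → ℝ) : ℕ → (ℕ → Fin d → ℝ) → Fin d → ℝ
  | 0, _ => v0
  | (k+1), xs => rdStep A b (vseq v0 k xs) (xs k)

lemma vseq_congr (v0 : Fin d → ℝ) (k : ℕ) {xs ys : ℕ → Fin d → ℝ}
    (h : ∀ i < k, xs i = ys i) : vseq A b v0 k xs = vseq A b v0 k ys := by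
  induction k with
  | zero => rfl
  | succ k ih =>
    simp only [vseq]
    rw [ih (fun i hi => h i (Nat.lt_succ_of_lt hi)), h k (Nat.lt_succ_self k)]

lemma measurable_vseq (v0 : Fin d → ℝ) (k : ℕ) : Measurable (vseq A b v0 k) := by
  induction k with
  | zero => exact measurable_const
  | succ k ih =>
    exact (measurable_rdStep A b).comp (ih.prodMk (measurable_pi_apply k))
end Meas

section Indep
open ProbabilityTheory MeasureTheory

lemma indep_v_x {d m : ℕ} {Ω : Type*} [MeasurableSpace Ω] {μ : Measure Ω}
    (A : Matrix (Fin m) (Fin d) ℝ) (b : Fin m → ℝ) (v0 : Fin d → ℝ)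
    (x : ℕ → Ω → Fin d → ℝ) (hxmeas : ∀ k, Measurable (x k))
    (hindep : iIndepFun x μ) (k : ℕ) :
    IndepFun (fun ω => vseq A b v0 k (fun i => x i ω)) (x k) μ := by
  have hdisj : Disjoint (Finset.range k) ({k} : Finset ℕ) := by simp
  have h := hindep.indepFun_finset (Finset.range k) {k} hdisj hxmeas
  set Φ : ((i : (Finset.range k : Finset ℕ)) → Fin d → ℝ) → Fin d → ℝ :=
    fun g => vseq A b v0 k (fun i => if h : i ∈ Finset.range k then g ⟨i, h⟩ else 0) with hΦ
  set Ψ : ((i : ({k} : Finset ℕ)) → Fin d → ℝ) → Fin d → ℝ :=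
    fun g => g ⟨k, Finset.mem_singleton_self k⟩ with hΨ
  have hΦm : Measurable Φ := by
    refine (measurable_vseq A b v0 k).comp ?_
    refine measurable_pi_lambda _ fun i => ?_
    by_cases hi : i ∈ Finset.range k
    · simp only [hi, dif_pos]; exact measurable_pi_apply _
    · simp only [hi, dif_neg, not_false_iff]; exact measurable_const
  have hΨm : Measurable Ψ := measurable_pi_apply _
  have h2 := h.comp hΦm hΨm
  have e1 : (fun ω => vseq A b v0 k (fun i => x i ω))
      = Φ ∘ (fun a (i : (Finset.range k : Finset ℕ)) => x i a) := by
    funext ω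
    exact vseq_congr A b v0 k (fun i hi => by simp [Finset.mem_range.mpr hi])
  rw [e1]
  exact h2
end Indep

lemma rdStep_residual {d m : ℕ} (A : Matrix (Fin m) (Fin d) ℝ) (b : Fin m → ℝ)
    (v xx : Fin d → ℝ) :
    (A.mulVec (rdStep A b v xx) - b) ⬝ᵥ (A.mulVec (rdStep A b v xx) - b)
      = (A.mulVec v - b) ⬝ᵥ (A.mulVec v - b)
        - ((A.mulVec v - b) ⬝ᵥ A.mulVec xx)^2 / (A.mulVec xx ⬝ᵥ A.mulVec xx) := by
  set r := A.mulVec v - b with hrdef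
  set z := A.mulVec xx with hzdef
  set t := (r ⬝ᵥ z) / (z ⬝ᵥ z) with htdef
  have hres : A.mulVec (rdStep A b v xx) - b = r - t • z := by
    simp only [rdStep, Matrix.mulVec_sub, Matrix.mulVec_smul, hrdef, hzdef]
    abel
  rw [hres]
  have hbil : (r - t • z) ⬝ᵥ (r - t • z) = r⬝ᵥr - 2*t*(r⬝ᵥz) + t^2*(z⬝ᵥz) := by
    simp only [sub_dotProduct, dotProduct_sub, smul_dotProduct,
      dotProduct_smul, smul_eq_mul, dotProduct_comm z r]
    ring
  rw [hbil]
  by_cases hz : z ⬝ᵥ z = 0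
  · have hz0 : z = 0 := dotProduct_self_eq_zero.mp hz
    simp [htdef, hz0]
  · rw [htdef]
    field_simp
    ring

lemma sum_sum_div_eq {d : ℕ} (u y : Fin d → ℝ) (c : ℝ) :
    ∑ i, ∑ j, u i * u j * (y i * y j / c) = (u ⬝ᵥ y)^2 / c := by
  rw [sq, dotProduct, Finset.sum_mul_sum, Finset.sum_div]
  refine Finset.sum_congr rfl fun i _ => ?_
  rw [Finset.sum_div]
  exact Finset.sum_congr rfl fun j _ => by ring

lemma dot_mulVec_expand {n : ℕ} (M : Matrix (Fin n) (Fin n) ℝ) (c : Fin n → ℝ) :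
    c ⬝ᵥ M.mulVec c = ∑ i, ∑ j, M i j * (c i * c j) := by
  simp only [dotProduct, Matrix.mulVec, Finset.mul_sum]
  exact Finset.sum_congr rfl fun i _ => Finset.sum_congr rfl fun j _ => by ring

lemma dot_AMAT {m d : ℕ} (A : Matrix (Fin m) (Fin d) ℝ) (M : Matrix (Fin d) (Fin d) ℝ)
    (r : Fin m → ℝ) :
    (Aᵀ.mulVec r) ⬝ᵥ M.mulVec (Aᵀ.mulVec r) = r ⬝ᵥ ((A * M * Aᵀ).mulVec r) := by
  rw [← Matrix.mulVec_mulVec, ← Matrix.mulVec_mulVec, Matrix.dotProduct_mulVec r,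
    Matrix.mulVec_transpose]

/-- for random descent iterates (consistent system),
`E(‖Av^{k+1} − b‖²) ≤ (1 − λ_min(M)σ_min(A)²)·E(‖Av^k − b‖²)` and also
`E(‖Av^{k+1} − b‖²) ≤ (1 − λ_min(A M Aᵀ))·E(‖Av^k − b‖²)`, where `M = E(xxᵀ/‖Ax‖²)`. -/
theorem rd_linear_residual_contraction
    {d m : ℕ} {Ω : Type*} [MeasurableSpace Ω] (μ : Measure Ω) [IsProbabilityMeasure μ]
    (A : Matrix (Fin m) (Fin d) ℝ) (b : Fin m → ℝ)
    (hcons : ∃ vhat : Fin d → ℝ, A.mulVec vhat = b)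
    (x : ℕ → Ω → Fin d → ℝ)
    (hxmeas : ∀ k, Measurable (x k))
    (hindep : iIndepFun x μ)
    (M : Matrix (Fin d) (Fin d) ℝ)
    (hMint : ∀ k i j, Integrable
        (fun ω => x k ω i * x k ω j / (A.mulVec (x k ω) ⬝ᵥ A.mulVec (x k ω))) μ)
    (hM : ∀ k i j, ∫ ω, x k ω i * x k ω j / (A.mulVec (x k ω) ⬝ᵥ A.mulVec (x k ω)) ∂μ
        = M i j)
    (lminM lminAMA : ℝ)
    (hlminM : lminM = sInf {t : ℝ | ∃ w : Fin d → ℝ, w ≠ 0 ∧ M.mulVec w = t • w})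
    (hlminAMA : lminAMA
        = sInf {t : ℝ | ∃ w : Fin m → ℝ, w ≠ 0 ∧ (A * M * Aᵀ).mulVec w = t • w})
    (v0 : Fin d → ℝ)
    (v : ℕ → Ω → Fin d → ℝ)
    (hv0 : ∀ ω, v 0 ω = v0)
    (hstep : ∀ k ω, v (k + 1) ω = rdStep A b (v k ω) (x k ω)) :
    ∀ k, (∫ ω, (A.mulVec (v (k + 1) ω) - b) ⬝ᵥ (A.mulVec (v (k + 1) ω) - b) ∂μ
        ≤ (1 - lminM * sigmaMinPos A ^ 2) *
            ∫ ω, (A.mulVec (v k ω) - b) ⬝ᵥ (A.mulVec (v k ω) - b) ∂μ) ∧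
      (∫ ω, (A.mulVec (v (k + 1) ω) - b) ⬝ᵥ (A.mulVec (v (k + 1) ω) - b) ∂μ
        ≤ (1 - lminAMA) *
            ∫ ω, (A.mulVec (v k ω) - b) ⬝ᵥ (A.mulVec (v k ω) - b) ∂μ) := by
  obtain ⟨vhat, hvhat⟩ := hcons
  have hveq : ∀ k ω, v k ω = vseq A b v0 k (fun i => x i ω) := by
    intro k
    induction k with
    | zero => intro ω; rw [hv0]; rfl
    | succ k ih => intro ω; rw [hstep, ih]; rfl
  have hvmeas : ∀ k, Measurable (v k) := by
    intro k
    have hk : v k = (vseq A b v0 k) ∘ (fun ω i => x i ω) := funext (hveq k)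
    rw [hk]
    exact (measurable_vseq A b v0 k).comp (measurable_pi_lambda _ fun i => hxmeas i)
  -- global bound on residuals
  set R0 : ℝ := (A.mulVec v0 - b) ⬝ᵥ (A.mulVec v0 - b) with hR0
  have hR0nn : 0 ≤ R0 := dotProduct_self_nonneg' _
  have hbound : ∀ j ω, (A.mulVec (v j ω) - b) ⬝ᵥ (A.mulVec (v j ω) - b) ≤ R0 := by
    intro j
    induction j with
    | zero => intro ω; rw [hv0]
    | succ j ih =>
      intro ω
      rw [hstep, rdStep_residual]
      have hnn : 0 ≤ ((A.mulVec (v j ω) - b) ⬝ᵥ A.mulVec (x j ω))^2 /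
          (A.mulVec (x j ω) ⬝ᵥ A.mulVec (x j ω)) :=
        div_nonneg (sq_nonneg _) (dotProduct_self_nonneg' _)
      linarith [ih ω]
  -- symmetry of M
  have hMT : Mᵀ = M := by
    ext i j
    show M j i = M i j
    rw [← hM 0 i j, ← hM 0 j i]
    congr 1
    funext ω
    rw [mul_comm (x 0 ω j) (x 0 ω i)]
  have hMsymm : M.IsHermitian := by
    unfold Matrix.IsHermitian
    rw [Matrix.conjTranspose_eq_transpose_of_trivial, hMT]
  -- PSD of M
  have hMpsd : ∀ w : Fin d → ℝ, 0 ≤ w ⬝ᵥ M.mulVec w := by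
    intro w
    have hexp : w ⬝ᵥ M.mulVec w = ∑ i, ∑ j, w i * w j * M i j := by
      simp only [dotProduct, Matrix.mulVec, Finset.mul_sum]
      exact Finset.sum_congr rfl fun i _ => Finset.sum_congr rfl fun j _ => by ring
    rw [hexp]
    have hterm : ∀ i j : Fin d, w i * w j * M i j
        = ∫ ω, w i * w j * (x 0 ω i * x 0 ω j /
            (A.mulVec (x 0 ω) ⬝ᵥ A.mulVec (x 0 ω))) ∂μ := by
      intro i j
      rw [MeasureTheory.integral_const_mul, hM 0 i j]
    simp_rw [hterm]
    have hstep1 : ∀ i : Fin d, ∑ j, (∫ ω, w i * w j * (x 0 ω i * x 0 ω j /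
            (A.mulVec (x 0 ω) ⬝ᵥ A.mulVec (x 0 ω))) ∂μ)
        = ∫ ω, ∑ j, w i * w j * (x 0 ω i * x 0 ω j /
            (A.mulVec (x 0 ω) ⬝ᵥ A.mulVec (x 0 ω))) ∂μ := fun i =>
      (MeasureTheory.integral_finset_sum _ fun j _ => (hMint 0 i j).const_mul _).symm
    simp_rw [hstep1]
    rw [← MeasureTheory.integral_finset_sum _
      (fun i _ => MeasureTheory.integrable_finset_sum _
        (fun j _ => ((hMint 0 i j).const_mul _)))]
    · refine MeasureTheory.integral_nonneg fun ω => ?_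
      rw [sum_sum_div_eq]
      exact div_nonneg (sq_nonneg _) (dotProduct_self_nonneg' _)
  have hlminM_nn : 0 ≤ lminM := hlminM ▸ sInf_nonneg_of_psd hMpsd
  -- hermitian A M Aᵀ
  have hAMA : (A * M * Aᵀ).IsHermitian := by
    unfold Matrix.IsHermitian
    rw [Matrix.conjTranspose_eq_transpose_of_trivial, Matrix.transpose_mul,
      Matrix.transpose_mul, Matrix.transpose_transpose, hMT, Matrix.mul_assoc]
  intro k
  -- abbreviations (as plain functions)
  have hrmeas : Measurable (fun ω => A.mulVec (v k ω) - b) :=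
    ((measurable_mulVec A).comp (hvmeas k)).sub measurable_const
  have hcmeas : Measurable (fun ω => Aᵀ.mulVec (A.mulVec (v k ω) - b)) :=
    (measurable_mulVec Aᵀ).comp hrmeas
  -- coordinates bound
  set Kc : Fin d → ℝ := fun i => (∑ l, |A l i|) * Real.sqrt R0 with hKc
  have hKcnn : ∀ i, 0 ≤ Kc i := fun i =>
    mul_nonneg (Finset.sum_nonneg fun l _ => abs_nonneg _) (Real.sqrt_nonneg _)
  have hcb : ∀ ω i, |Aᵀ.mulVec (A.mulVec (v k ω) - b) i| ≤ Kc i := by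
    intro ω i
    have hrl : ∀ l, |(A.mulVec (v k ω) - b) l| ≤ Real.sqrt R0 := by
      intro l
      have h1 : ((A.mulVec (v k ω) - b) l)^2 ≤ (A.mulVec (v k ω) - b) ⬝ᵥ (A.mulVec (v k ω) - b) := by
        unfold dotProduct
        rw [sq]
        exact Finset.single_le_sum
          (f := fun j => (A.mulVec (v k ω) - b) j * (A.mulVec (v k ω) - b) j)
          (fun l _ => mul_self_nonneg _) (Finset.mem_univ l)
      have h2 := le_trans h1 (hbound k ω)
      calc |(A.mulVec (v k ω) - b) l| = Real.sqrt (((A.mulVec (v k ω) - b) l)^2) :=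
            (Real.sqrt_sq_eq_abs _).symm
        _ ≤ Real.sqrt R0 := Real.sqrt_le_sqrt h2
    calc |Aᵀ.mulVec (A.mulVec (v k ω) - b) i|
        = |∑ l, Aᵀ i l * (A.mulVec (v k ω) - b) l| := rfl
      _ ≤ ∑ l, |Aᵀ i l * (A.mulVec (v k ω) - b) l| := Finset.abs_sum_le_sum_abs _ _
      _ ≤ ∑ l, |A l i| * Real.sqrt R0 := by
          refine Finset.sum_le_sum fun l _ => ?_
          rw [abs_mul]
          exact mul_le_mul_of_nonneg_left (hrl l) (abs_nonneg _)
      _ = Kc i := by simp [hKc, Finset.sum_mul]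
  have hccmeas : ∀ i j : Fin d, Measurable (fun ω =>
      Aᵀ.mulVec (A.mulVec (v k ω) - b) i * Aᵀ.mulVec (A.mulVec (v k ω) - b) j) := fun i j =>
    ((measurable_pi_apply i).comp hcmeas).mul ((measurable_pi_apply j).comp hcmeas)
  have hcc_int : ∀ i j : Fin d, Integrable (fun ω =>
      Aᵀ.mulVec (A.mulVec (v k ω) - b) i * Aᵀ.mulVec (A.mulVec (v k ω) - b) j) μ := by
    intro i j
    refine (MeasureTheory.integrable_const (Kc i * Kc j)).mono'
      (hccmeas i j).aestronglyMeasurable (MeasureTheory.ae_of_all _ fun ω => ?_)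
    rw [Real.norm_eq_abs, abs_mul]
    exact mul_le_mul (hcb ω i) (hcb ω j) (abs_nonneg _) (hKcnn i)
  have hterm_int : ∀ i j : Fin d, Integrable (fun ω =>
      Aᵀ.mulVec (A.mulVec (v k ω) - b) i * Aᵀ.mulVec (A.mulVec (v k ω) - b) j *
        (x k ω i * x k ω j / (A.mulVec (x k ω) ⬝ᵥ A.mulVec (x k ω)))) μ := by
    intro i j
    refine (hMint k i j).bdd_mul (hccmeas i j).aestronglyMeasurable (c := Kc i * Kc j)
      (MeasureTheory.ae_of_all _ fun ω => ?_)
    rw [Real.norm_eq_abs, abs_mul]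
    exact mul_le_mul (hcb ω i) (hcb ω j) (abs_nonneg _) (hKcnn i)
  have hterm_val : ∀ i j : Fin d,
      (∫ ω, Aᵀ.mulVec (A.mulVec (v k ω) - b) i * Aᵀ.mulVec (A.mulVec (v k ω) - b) j *
        (x k ω i * x k ω j / (A.mulVec (x k ω) ⬝ᵥ A.mulVec (x k ω))) ∂μ)
      = (∫ ω, Aᵀ.mulVec (A.mulVec (v k ω) - b) i *
          Aᵀ.mulVec (A.mulVec (v k ω) - b) j ∂μ) * M i j := by
    intro i j
    have h0 : Measurable (fun u : Fin d → ℝ => Aᵀ.mulVec (A.mulVec u - b)) :=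
      (measurable_mulVec Aᵀ).comp ((measurable_mulVec A).sub measurable_const)
    have hFmeas : Measurable (fun u : Fin d → ℝ =>
        Aᵀ.mulVec (A.mulVec u - b) i * Aᵀ.mulVec (A.mulVec u - b) j) :=
      ((measurable_pi_apply i).comp h0).mul ((measurable_pi_apply j).comp h0)
    have hGmeas : Measurable (fun y : Fin d → ℝ =>
        y i * y j / (A.mulVec y ⬝ᵥ A.mulVec y)) :=
      ((measurable_pi_apply i).mul (measurable_pi_apply j)).div
        (measurable_dotProduct.comp ((measurable_mulVec A).prodMk (measurable_mulVec A)))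
    have hIF := (indep_v_x A b v0 x hxmeas hindep k).comp hFmeas hGmeas
    have e1 : (fun ω => Aᵀ.mulVec (A.mulVec (v k ω) - b) i * Aᵀ.mulVec (A.mulVec (v k ω) - b) j)
        = (fun u : Fin d → ℝ => Aᵀ.mulVec (A.mulVec u - b) i * Aᵀ.mulVec (A.mulVec u - b) j)
          ∘ (fun ω => vseq A b v0 k (fun i => x i ω)) := by
      funext ω
      simp only [Function.comp_apply, ← hveq k ω]
    have hX : Integrable ((fun u : Fin d → ℝ =>
        Aᵀ.mulVec (A.mulVec u - b) i * Aᵀ.mulVec (A.mulVec u - b) j)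
          ∘ (fun ω => vseq A b v0 k (fun i => x i ω))) μ := by
      rw [← e1]; exact hcc_int i j
    have hY : Integrable ((fun y : Fin d → ℝ =>
        y i * y j / (A.mulVec y ⬝ᵥ A.mulVec y)) ∘ (x k)) μ := hMint k i j
    have hmul := hIF.integral_mul_eq_mul_integral hX.aestronglyMeasurable hY.aestronglyMeasurable
    have e3 : (fun ω : Ω => Aᵀ.mulVec (A.mulVec (v k ω) - b) i *
          Aᵀ.mulVec (A.mulVec (v k ω) - b) j *
          (x k ω i * x k ω j / (A.mulVec (x k ω) ⬝ᵥ A.mulVec (x k ω))))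
        = ((fun u : Fin d → ℝ => Aᵀ.mulVec (A.mulVec u - b) i * Aᵀ.mulVec (A.mulVec u - b) j)
            ∘ (fun ω => vseq A b v0 k (fun i => x i ω)))
          * ((fun y : Fin d → ℝ => y i * y j / (A.mulVec y ⬝ᵥ A.mulVec y)) ∘ (x k)) := by
      funext ω
      simp only [Pi.mul_apply, Function.comp_apply, ← hveq k ω]
    rw [← hM k i j, congrArg (integral μ) e3, hmul, ← e1]
    rfl
  have hDexp : ∀ ω : Ω, ((A.mulVec (v k ω) - b) ⬝ᵥ A.mulVec (x k ω))^2 /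
        (A.mulVec (x k ω) ⬝ᵥ A.mulVec (x k ω))
      = ∑ i, ∑ j, Aᵀ.mulVec (A.mulVec (v k ω) - b) i * Aᵀ.mulVec (A.mulVec (v k ω) - b) j *
          (x k ω i * x k ω j / (A.mulVec (x k ω) ⬝ᵥ A.mulVec (x k ω))) := by
    intro ω
    rw [sum_sum_div_eq]
    congr 2
    rw [Matrix.dotProduct_mulVec, Matrix.mulVec_transpose]
  have hD_int : Integrable (fun ω => ((A.mulVec (v k ω) - b) ⬝ᵥ A.mulVec (x k ω))^2 /
        (A.mulVec (x k ω) ⬝ᵥ A.mulVec (x k ω))) μ := by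
    rw [funext hDexp]
    exact MeasureTheory.integrable_finset_sum _ fun i _ =>
      MeasureTheory.integrable_finset_sum _ fun j _ => hterm_int i j
  have hrr_int : Integrable (fun ω => (A.mulVec (v k ω) - b) ⬝ᵥ (A.mulVec (v k ω) - b)) μ := by
    refine (MeasureTheory.integrable_const R0).mono'
      ((measurable_dotProduct.comp (hrmeas.prodMk hrmeas)).aestronglyMeasurable)
      (MeasureTheory.ae_of_all _ fun ω => ?_)
    rw [Real.norm_eq_abs, abs_of_nonneg (dotProduct_self_nonneg' _)]
    exact hbound k ω
  have hcMc_int : Integrable (fun ω => Aᵀ.mulVec (A.mulVec (v k ω) - b) ⬝ᵥ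
      M.mulVec (Aᵀ.mulVec (A.mulVec (v k ω) - b))) μ := by
    have e : (fun ω => Aᵀ.mulVec (A.mulVec (v k ω) - b) ⬝ᵥ
        M.mulVec (Aᵀ.mulVec (A.mulVec (v k ω) - b)))
        = fun ω => ∑ i, ∑ j, M i j * (Aᵀ.mulVec (A.mulVec (v k ω) - b) i *
            Aᵀ.mulVec (A.mulVec (v k ω) - b) j) :=
      funext fun ω => dot_mulVec_expand M _
    rw [e]
    exact MeasureTheory.integrable_finset_sum _ fun i _ =>
      MeasureTheory.integrable_finset_sum _ fun j _ => (hcc_int i j).const_mul _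
  -- ∫ D = ∫ c ⬝ᵥ M c
  have hintD : (∫ ω, ((A.mulVec (v k ω) - b) ⬝ᵥ A.mulVec (x k ω))^2 /
        (A.mulVec (x k ω) ⬝ᵥ A.mulVec (x k ω)) ∂μ)
      = ∫ ω, Aᵀ.mulVec (A.mulVec (v k ω) - b) ⬝ᵥ
          M.mulVec (Aᵀ.mulVec (A.mulVec (v k ω) - b)) ∂μ := by
    rw [funext hDexp]
    rw [MeasureTheory.integral_finset_sum _ (fun i _ =>
      MeasureTheory.integrable_finset_sum _ fun j _ => hterm_int i j)]
    have h1 : ∀ i : Fin d, (∫ ω, ∑ j, Aᵀ.mulVec (A.mulVec (v k ω) - b) i *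
          Aᵀ.mulVec (A.mulVec (v k ω) - b) j *
          (x k ω i * x k ω j / (A.mulVec (x k ω) ⬝ᵥ A.mulVec (x k ω))) ∂μ)
        = ∑ j, ∫ ω, Aᵀ.mulVec (A.mulVec (v k ω) - b) i *
          Aᵀ.mulVec (A.mulVec (v k ω) - b) j *
          (x k ω i * x k ω j / (A.mulVec (x k ω) ⬝ᵥ A.mulVec (x k ω))) ∂μ :=
      fun i => MeasureTheory.integral_finset_sum _ fun j _ => hterm_int i j
    simp_rw [h1, hterm_val]
    have e : (fun ω => Aᵀ.mulVec (A.mulVec (v k ω) - b) ⬝ᵥ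
        M.mulVec (Aᵀ.mulVec (A.mulVec (v k ω) - b)))
        = fun ω => ∑ i, ∑ j, M i j * (Aᵀ.mulVec (A.mulVec (v k ω) - b) i *
            Aᵀ.mulVec (A.mulVec (v k ω) - b) j) :=
      funext fun ω => dot_mulVec_expand M _
    rw [e]
    rw [MeasureTheory.integral_finset_sum _ (fun i _ =>
      MeasureTheory.integrable_finset_sum _ fun j _ => (hcc_int i j).const_mul (M i j))]
    have h2 : ∀ i : Fin d, (∫ ω, ∑ j, M i j * (Aᵀ.mulVec (A.mulVec (v k ω) - b) i *
          Aᵀ.mulVec (A.mulVec (v k ω) - b) j) ∂μ)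
        = ∑ j, ∫ ω, M i j * (Aᵀ.mulVec (A.mulVec (v k ω) - b) i *
          Aᵀ.mulVec (A.mulVec (v k ω) - b) j) ∂μ :=
      fun i => MeasureTheory.integral_finset_sum _ fun j _ => (hcc_int i j).const_mul _
    simp_rw [h2, MeasureTheory.integral_const_mul]
    exact Finset.sum_congr rfl fun i _ => Finset.sum_congr rfl fun j _ => mul_comm _ _
  -- pointwise lower bounds for c ⬝ᵥ M c
  have hlow1 : ∀ ω : Ω, lminM * sigmaMinPos A ^ 2 *
        ((A.mulVec (v k ω) - b) ⬝ᵥ (A.mulVec (v k ω) - b))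
      ≤ Aᵀ.mulVec (A.mulVec (v k ω) - b) ⬝ᵥ
          M.mulVec (Aᵀ.mulVec (A.mulVec (v k ω) - b)) := by
    intro ω
    have h1 : lminM * (Aᵀ.mulVec (A.mulVec (v k ω) - b) ⬝ᵥ Aᵀ.mulVec (A.mulVec (v k ω) - b))
        ≤ Aᵀ.mulVec (A.mulVec (v k ω) - b) ⬝ᵥ
            M.mulVec (Aᵀ.mulVec (A.mulVec (v k ω) - b)) := by
      rw [hlminM]
      exact quad_lower hMsymm _
    have hres : A.mulVec (v k ω - vhat) = A.mulVec (v k ω) - b := by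
      rw [Matrix.mulVec_sub, hvhat]
    have h2 : sigmaMinPos A ^ 2 * ((A.mulVec (v k ω) - b) ⬝ᵥ (A.mulVec (v k ω) - b))
        ≤ Aᵀ.mulVec (A.mulVec (v k ω) - b) ⬝ᵥ Aᵀ.mulVec (A.mulVec (v k ω) - b) := by
      have := sigma_bound A (v k ω - vhat)
      rwa [hres] at this
    calc lminM * sigmaMinPos A ^ 2 * ((A.mulVec (v k ω) - b) ⬝ᵥ (A.mulVec (v k ω) - b))
        = lminM * (sigmaMinPos A ^ 2 * ((A.mulVec (v k ω) - b) ⬝ᵥ (A.mulVec (v k ω) - b))) := by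
          ring
      _ ≤ lminM * (Aᵀ.mulVec (A.mulVec (v k ω) - b) ⬝ᵥ Aᵀ.mulVec (A.mulVec (v k ω) - b)) :=
          mul_le_mul_of_nonneg_left h2 hlminM_nn
      _ ≤ _ := h1
  have hlow2 : ∀ ω : Ω, lminAMA * ((A.mulVec (v k ω) - b) ⬝ᵥ (A.mulVec (v k ω) - b))
      ≤ Aᵀ.mulVec (A.mulVec (v k ω) - b) ⬝ᵥ
          M.mulVec (Aᵀ.mulVec (A.mulVec (v k ω) - b)) := by
    intro ω
    rw [dot_AMAT, hlminAMA]
    exact quad_lower hAMA _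
  -- put everything together
  have hkey : (∫ ω, (A.mulVec (v (k+1) ω) - b) ⬝ᵥ (A.mulVec (v (k+1) ω) - b) ∂μ)
      = (∫ ω, (A.mulVec (v k ω) - b) ⬝ᵥ (A.mulVec (v k ω) - b) ∂μ)
        - ∫ ω, ((A.mulVec (v k ω) - b) ⬝ᵥ A.mulVec (x k ω))^2 /
            (A.mulVec (x k ω) ⬝ᵥ A.mulVec (x k ω)) ∂μ := by
    have e : (fun ω => (A.mulVec (v (k+1) ω) - b) ⬝ᵥ (A.mulVec (v (k+1) ω) - b))
        = fun ω => (A.mulVec (v k ω) - b) ⬝ᵥ (A.mulVec (v k ω) - b)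
          - ((A.mulVec (v k ω) - b) ⬝ᵥ A.mulVec (x k ω))^2 /
              (A.mulVec (x k ω) ⬝ᵥ A.mulVec (x k ω)) := by
      funext ω
      rw [hstep]
      exact rdStep_residual A b (v k ω) (x k ω)
    rw [e]
    exact MeasureTheory.integral_sub hrr_int hD_int
  have hrr_nn : 0 ≤ ∫ ω, (A.mulVec (v k ω) - b) ⬝ᵥ (A.mulVec (v k ω) - b) ∂μ :=
    MeasureTheory.integral_nonneg fun ω => dotProduct_self_nonneg' _
  constructor
  · have hmono : lminM * sigmaMinPos A ^ 2 *
        (∫ ω, (A.mulVec (v k ω) - b) ⬝ᵥ (A.mulVec (v k ω) - b) ∂μ)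
      ≤ ∫ ω, ((A.mulVec (v k ω) - b) ⬝ᵥ A.mulVec (x k ω))^2 /
          (A.mulVec (x k ω) ⬝ᵥ A.mulVec (x k ω)) ∂μ := by
      rw [hintD, ← MeasureTheory.integral_const_mul]
      exact MeasureTheory.integral_mono (hrr_int.const_mul _) hcMc_int hlow1
    rw [hkey]
    nlinarith [hmono]
  · have hmono : lminAMA *
        (∫ ω, (A.mulVec (v k ω) - b) ⬝ᵥ (A.mulVec (v k ω) - b) ∂μ)
      ≤ ∫ ω, ((A.mulVec (v k ω) - b) ⬝ᵥ A.mulVec (x k ω))^2 /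
          (A.mulVec (x k ω) ⬝ᵥ A.mulVec (x k ω)) ∂μ := by
      rw [hintD, ← MeasureTheory.integral_const_mul]
      exact MeasureTheory.integral_mono (hrr_int.const_mul _) hcMc_int hlow2
    rw [hkey]
    nlinarith [hmono]
end
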